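/- arXiv:2401.06636 — 6 statements merged into one kernel-verified Lean document; each statement's English description precedes it below -/
import Mathlib

section
/- The one-point compactification OnePoint(B^2_{[0,∞)}), with the multiplication extending that of B_{[0,∞)} and with ∞ as a zero element, is a compact Hausdorff space in which the multiplication is separately continuous (for every element u the maps v ↦ u·v and v ↦ v·u are continuous) and the inversion map sending (a,b) ↦ (b,a) and ∞ ↦ ∞ is continuous. -/
/-- The underlying set of the semigroup `B_{[0,∞)}`: pairs of non-negative reals. -/
abbrev Bsg := {p : ℝ × ℝ // 0 ≤ p.1 ∧ 0 ≤ p.2}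

namespace Bsg

/-- The multiplication `(a,b)·(c,d) = (a+c−min b c, b+d−min b c)`. -/
def bmul (u v : Bsg) : Bsg :=
  ⟨(u.1.1 + v.1.1 - min u.1.2 v.1.1, u.1.2 + v.1.2 - min u.1.2 v.1.1),
    by
      refine ⟨?_, ?_⟩
      · show (0:ℝ) ≤ u.1.1 + v.1.1 - min u.1.2 v.1.1
        have h := min_le_right u.1.2 v.1.1
        have h1 := u.2.1; have h2 := v.2.1; linarith
      · show (0:ℝ) ≤ u.1.2 + v.1.2 - min u.1.2 v.1.1
        have h := min_le_left u.1.2 v.1.1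
        have h1 := u.2.2; have h2 := v.2.2; linarith⟩

instance : Semigroup Bsg where
  mul := bmul
  mul_assoc := by
    rintro ⟨⟨a,b⟩,ha,hb⟩ ⟨⟨c,d⟩,hc,hd⟩ ⟨⟨e,g⟩,he,hg⟩
    show bmul (bmul _ _) _ = bmul _ (bmul _ _)
    apply Subtype.ext
    rw [Prod.ext_iff]
    constructor <;>
      simp only [bmul, min_def] <;> split_ifs <;> simp_all <;> linarith

/-- The natural partial order on the inverse semigroup `B_{[0,∞)}`:
`s ≼ t` iff `s = t·e` for some idempotent `e`. -/
def ple (s t : Bsg) : Prop := ∃ e : Bsg, e * e = e ∧ s = t * e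

/-- `L_α^+ = {(x, x+α) : x ≥ 0}`. -/
def Lplus (α : ℝ) : Set Bsg := {p | p.1.2 = p.1.1 + α}

/-- `L_α^− = {(x+α, x) : x ≥ 0}`. -/
def Lminus (α : ℝ) : Set Bsg := {p | p.1.1 = p.1.2 + α}

/-- `↓(a,b)`, the down-set of an element w.r.t. the natural partial order. -/
def lowerSet (t : Bsg) : Set Bsg := {s | ple s t}

/-- `↓°(a,b) = ↓(a,b) \ {(a,b)}`. -/
def lowerSetStrict (t : Bsg) : Set Bsg := lowerSet t \ {t}

/-- The inversion `(a,b) ↦ (b,a)`. -/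
def binv (u : Bsg) : Bsg := ⟨(u.1.2, u.1.1), u.2.2, u.2.1⟩

end Bsg

/-- The topology `τ_L`, induced by the injection `(a,b) ↦ (b−a, min(a,b))` into `ℝ_d × ℝ`,
where the first factor carries the discrete topology. -/
def tauL : TopologicalSpace Bsg :=
  TopologicalSpace.induced (fun p : Bsg => ((p.1.2 - p.1.1, min p.1.1 p.1.2) : ℝ × ℝ))
    (@instTopologicalSpaceProd ℝ ℝ ⊥ inferInstance)

/- `B^2_{[0,∞)}`: we equip `Bsg` with the topology `τ_L`. -/
instance (priority := 2000) : TopologicalSpace Bsg := tauL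

open Bsg in
/-- The multiplication of `B_{[0,∞)}` extended to the one-point compactification,
with `∞` as a zero element. -/
def omul (u v : OnePoint Bsg) : OnePoint Bsg :=
  Option.elim u OnePoint.infty
    (fun a => Option.elim v OnePoint.infty (fun b => (Option.some (a * b) : OnePoint Bsg)))

open Bsg in
/-- The inversion `(a,b) ↦ (b,a)`, `∞ ↦ ∞` on the one-point compactification. -/
def oinv (u : OnePoint Bsg) : OnePoint Bsg :=
  Option.elim u OnePoint.infty (fun a => (Option.some (binv a) : OnePoint Bsg))


section Aux

open Bsg Filter Set Topology

/-- Type synonym for `ℝ` with the discrete topology. -/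
def Rd : Type := ℝ

instance : TopologicalSpace Rd := (⊥ : TopologicalSpace ℝ)
instance : DiscreteTopology Rd := ⟨rfl⟩

def Rd.ofReal (x : ℝ) : Rd := x
def Rd.toReal (x : Rd) : ℝ := x

/-- The "difference" coordinate, valued in the discrete reals. -/
def dd (p : Bsg) : Rd := Rd.ofReal (p.1.2 - p.1.1)

/-- The "minimum" coordinate. -/
def mm (p : Bsg) : ℝ := min p.1.1 p.1.2

def phiB (p : Bsg) : Rd × ℝ := (dd p, mm p)

lemma inducing_phiB : IsInducing phiB := ⟨rfl⟩

lemma cont_phiB : Continuous phiB := inducing_phiB.continuous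

lemma cont_dd : Continuous dd := (continuous_fst.comp cont_phiB : _)

lemma cont_mm : Continuous mm := (continuous_snd.comp cont_phiB : _)

lemma mm_nonneg (p : Bsg) : 0 ≤ mm p := le_min p.2.1 p.2.2

lemma cont_c : Continuous (fun p : Bsg => p.1.1) := by
  have h : (fun p : Bsg => p.1.1)
      = fun p : Bsg => mm p - (fun t : Rd => min (Rd.toReal t) 0) (dd p) := by
    funext p
    show p.1.1 = min p.1.1 p.1.2 - min (p.1.2 - p.1.1) 0
    rcases le_total p.1.1 p.1.2 with h | h
    · rw [min_eq_left h, min_eq_right (by linarith)]; ring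
    · rw [min_eq_right h, min_eq_left (by linarith)]; ring
  rw [h]
  exact cont_mm.sub ((continuous_of_discreteTopology
    (f := fun t : Rd => min (Rd.toReal t) 0)).comp cont_dd)

lemma cont_d : Continuous (fun p : Bsg => p.1.2) := by
  have h : (fun p : Bsg => p.1.2)
      = fun p : Bsg => mm p + (fun t : Rd => max (Rd.toReal t) 0) (dd p) := by
    funext p
    show p.1.2 = min p.1.1 p.1.2 + max (p.1.2 - p.1.1) 0
    rcases le_total p.1.1 p.1.2 with h | h
    · rw [min_eq_left h, max_eq_left (by linarith)]; ring
    · rw [min_eq_right h, max_eq_right (by linarith)]; ring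
  rw [h]
  exact cont_mm.add ((continuous_of_discreteTopology
    (f := fun t : Rd => max (Rd.toReal t) 0)).comp cont_dd)

lemma continuous_of_coords {Y : Type*} [TopologicalSpace Y] {f : Y → Bsg}
    (h1 : Continuous fun y => dd (f y)) (h2 : Continuous fun y => mm (f y)) :
    Continuous f :=
  inducing_phiB.continuous_iff.mpr (h1.prodMk h2)

lemma injective_phiB : Function.Injective phiB := by
  intro p q h
  have h1 : p.1.2 - p.1.1 = q.1.2 - q.1.1 := congrArg (fun x : Rd × ℝ => Rd.toReal x.1) h
  have h2 : min p.1.1 p.1.2 = min q.1.1 q.1.2 := congrArg Prod.snd h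
  have key : ∀ r : Bsg, r.1.1 = min r.1.1 r.1.2 - min (r.1.2 - r.1.1) 0 := by
    intro r
    rcases le_total r.1.1 r.1.2 with h | h
    · rw [min_eq_left h, min_eq_right (by linarith)]; ring
    · rw [min_eq_right h, min_eq_left (by linarith)]; ring
  have hp1 : p.1.1 = q.1.1 := by rw [key p, key q, h1, h2]
  have hp2 : p.1.2 = q.1.2 := by
    have := key p; have := key q
    have hd : p.1.2 - p.1.1 = q.1.2 - q.1.1 := h1
    linarith
  exact Subtype.ext (Prod.ext hp1 hp2)

lemma embedding_phiB : IsEmbedding phiB := ⟨inducing_phiB, injective_phiB⟩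

instance : T2Space Bsg := embedding_phiB.t2Space

/-- The point of `Bsg` with difference coordinate `α` and minimum coordinate `max x 0`. -/
def pt (α : Rd) (x : ℝ) : Bsg :=
  ⟨(max x 0 - min (Rd.toReal α) 0, max x 0 + max (Rd.toReal α) 0),
    by
      constructor
      · have h1 := le_max_right x 0
        have h2 := min_le_right (Rd.toReal α) 0
        show (0:ℝ) ≤ max x 0 - min (Rd.toReal α) 0
        linarith
      · have h1 := le_max_right x 0
        have h2 := le_max_right (Rd.toReal α) 0
        show (0:ℝ) ≤ max x 0 + max (Rd.toReal α) 0
        linarith⟩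

lemma dd_pt (α : Rd) (x : ℝ) : dd (pt α x) = α := by
  show ((max x 0 + max (Rd.toReal α) 0) - (max x 0 - min (Rd.toReal α) 0) : ℝ) = Rd.toReal α
  rcases le_total (Rd.toReal α) 0 with h | h
  · rw [min_eq_left h, max_eq_right h]; ring
  · rw [min_eq_right h, max_eq_left h]; ring

lemma mm_pt (α : Rd) (x : ℝ) : mm (pt α x) = max x 0 := by
  show min (max x 0 - min (Rd.toReal α) 0) (max x 0 + max (Rd.toReal α) 0) = max x 0
  rcases le_total (Rd.toReal α) 0 with h | h
  · rw [min_eq_left h, max_eq_right h, add_zero]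
    exact min_eq_right (by linarith)
  · rw [min_eq_right h, max_eq_left h, sub_zero]
    exact min_eq_left (by linarith)

lemma cont_pt (α : Rd) : Continuous (pt α) := by
  apply continuous_of_coords
  · simp only [dd_pt]; exact continuous_const
  · simp only [mm_pt]; exact continuous_id.max continuous_const

lemma pt_eq (v : Bsg) : pt (dd v) (mm v) = v := by
  apply Subtype.ext
  apply Prod.ext
  · show max (min v.1.1 v.1.2) 0 - min (v.1.2 - v.1.1) 0 = v.1.1
    rw [max_eq_left (show (0:ℝ) ≤ min v.1.1 v.1.2 from le_min v.2.1 v.2.2)]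
    rcases le_total v.1.1 v.1.2 with h | h
    · rw [min_eq_left h, min_eq_right (by linarith)]; ring
    · rw [min_eq_right h, min_eq_left (by linarith)]; ring
  · show max (min v.1.1 v.1.2) 0 + max (v.1.2 - v.1.1) 0 = v.1.2
    rw [max_eq_left (show (0:ℝ) ≤ min v.1.1 v.1.2 from le_min v.2.1 v.2.2)]
    rcases le_total v.1.1 v.1.2 with h | h
    · rw [min_eq_left h, max_eq_left (by linarith)]; ring
    · rw [min_eq_right h, max_eq_right (by linarith)]; ring

instance : WeaklyLocallyCompactSpace Bsg := by
  constructor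
  intro v
  refine ⟨pt (dd v) '' Icc 0 (mm v + 1), isCompact_Icc.image (cont_pt _), ?_⟩
  have hopen : IsOpen (phiB ⁻¹' ({dd v} ×ˢ Iio (mm v + 1))) :=
    ((isOpen_discrete {dd v}).prod isOpen_Iio).preimage cont_phiB
  refine Filter.mem_of_superset (hopen.mem_nhds ?_) ?_
  · exact ⟨rfl, show mm v < mm v + 1 by linarith⟩
  · rintro w ⟨hw1, hw2⟩
    have hw1' : dd w = dd v := hw1
    have hw2' : mm w < mm v + 1 := hw2
    exact ⟨mm w, ⟨mm_nonneg w, le_of_lt hw2'⟩, by rw [← hw1']; exact pt_eq w⟩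

instance : T2Space (OnePoint Bsg) := inferInstance

lemma tendsto_cocompact_aux (f : Bsg → Bsg) (g : Rd → Rd) (C : ℝ)
    (hg : ∀ v, dd v = g (dd (f v))) (hC : ∀ v, mm v ≤ mm (f v) + C) :
    Tendsto f (cocompact Bsg) (cocompact Bsg) := by
  rw [hasBasis_cocompact.tendsto_iff hasBasis_cocompact]
  intro K hK
  obtain ⟨M, hM⟩ : ∃ M, ∀ v ∈ K, mm v ≤ M := by
    rcases (hK.image cont_mm).bddAbove with ⟨M, hM⟩
    exact ⟨M, fun v hv => hM (mem_image_of_mem mm hv)⟩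
  have hS : (g '' (dd '' K)).Finite := ((hK.image cont_dd).finite_of_discrete).image g
  refine ⟨⋃ α ∈ g '' (dd '' K), pt α '' Icc 0 (M + C), ?_, ?_⟩
  · exact hS.isCompact_biUnion fun α _ => isCompact_Icc.image (cont_pt α)
  · intro v hv
    intro hfv
    apply hv
    have hα : dd v ∈ g '' (dd '' K) :=
      (hg v) ▸ mem_image_of_mem g (mem_image_of_mem dd hfv)
    refine mem_biUnion hα ?_
    refine ⟨mm v, ⟨mm_nonneg v, ?_⟩, pt_eq v⟩
    have := hC v
    have := hM (f v) hfv
    linarith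

lemma cont_left_mul (u : Bsg) : Continuous (fun v : Bsg => u * v) := by
  apply continuous_of_coords
  · have h : (fun v : Bsg => dd (u * v))
        = (fun t : Rd => Rd.ofReal (Rd.toReal t + (u.1.2 - u.1.1))) ∘ dd := by
      funext v
      show ((u.1.2 + v.1.2 - min u.1.2 v.1.1) - (u.1.1 + v.1.1 - min u.1.2 v.1.1) : ℝ)
          = (v.1.2 - v.1.1) + (u.1.2 - u.1.1)
      ring
    rw [h]
    exact continuous_of_discreteTopology.comp cont_dd
  · have h : (fun v : Bsg => mm (u * v))
        = fun v : Bsg => min (u.1.1 + v.1.1 - min u.1.2 v.1.1)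
            (u.1.2 + v.1.2 - min u.1.2 v.1.1) := rfl
    rw [h]
    exact ((continuous_const.add cont_c).sub (continuous_const.min cont_c)).min
      ((continuous_const.add cont_d).sub (continuous_const.min cont_c))

lemma cont_right_mul (u : Bsg) : Continuous (fun v : Bsg => v * u) := by
  apply continuous_of_coords
  · have h : (fun v : Bsg => dd (v * u))
        = (fun t : Rd => Rd.ofReal (Rd.toReal t + (u.1.2 - u.1.1))) ∘ dd := by
      funext v
      show ((v.1.2 + u.1.2 - min v.1.2 u.1.1) - (v.1.1 + u.1.1 - min v.1.2 u.1.1) : ℝ)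
          = (v.1.2 - v.1.1) + (u.1.2 - u.1.1)
      ring
    rw [h]
    exact continuous_of_discreteTopology.comp cont_dd
  · have h : (fun v : Bsg => mm (v * u))
        = fun v : Bsg => min (v.1.1 + u.1.1 - min v.1.2 u.1.1)
            (v.1.2 + u.1.2 - min v.1.2 u.1.1) := rfl
    rw [h]
    exact ((cont_c.add continuous_const).sub (cont_d.min continuous_const)).min
      ((cont_d.add continuous_const).sub (cont_d.min continuous_const))

lemma cont_binv : Continuous binv := by
  apply continuous_of_coords
  · have h : (fun v : Bsg => dd (binv v))
        = (fun t : Rd => Rd.ofReal (-(Rd.toReal t))) ∘ dd := by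
      funext v
      show (v.1.1 - v.1.2 : ℝ) = -(v.1.2 - v.1.1)
      ring
    rw [h]
    exact continuous_of_discreteTopology.comp cont_dd
  · have h : (fun v : Bsg => mm (binv v)) = fun v : Bsg => min v.1.2 v.1.1 := rfl
    rw [h]
    exact cont_d.min cont_c

lemma tendsto_left_mul (u : Bsg) :
    Tendsto (fun v : Bsg => u * v) (cocompact Bsg) (cocompact Bsg) := by
  apply tendsto_cocompact_aux _ (fun t : Rd => Rd.ofReal (Rd.toReal t - (u.1.2 - u.1.1))) u.1.2
  · intro v
    show (v.1.2 - v.1.1 : ℝ)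
        = ((u.1.2 + v.1.2 - min u.1.2 v.1.1) - (u.1.1 + v.1.1 - min u.1.2 v.1.1))
          - (u.1.2 - u.1.1)
    ring
  · intro v
    show min v.1.1 v.1.2
        ≤ min (u.1.1 + v.1.1 - min u.1.2 v.1.1) (u.1.2 + v.1.2 - min u.1.2 v.1.1) + u.1.2
    rw [min_sub_sub_right]
    have h1 : min v.1.1 v.1.2 ≤ min (u.1.1 + v.1.1) (u.1.2 + v.1.2) :=
      min_le_min (by linarith [u.2.1]) (by linarith [u.2.2])
    have h2 : min u.1.2 v.1.1 ≤ u.1.2 := min_le_left _ _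
    linarith

lemma tendsto_right_mul (u : Bsg) :
    Tendsto (fun v : Bsg => v * u) (cocompact Bsg) (cocompact Bsg) := by
  apply tendsto_cocompact_aux _ (fun t : Rd => Rd.ofReal (Rd.toReal t - (u.1.2 - u.1.1))) u.1.1
  · intro v
    show (v.1.2 - v.1.1 : ℝ)
        = ((v.1.2 + u.1.2 - min v.1.2 u.1.1) - (v.1.1 + u.1.1 - min v.1.2 u.1.1))
          - (u.1.2 - u.1.1)
    ring
  · intro v
    show min v.1.1 v.1.2
        ≤ min (v.1.1 + u.1.1 - min v.1.2 u.1.1) (v.1.2 + u.1.2 - min v.1.2 u.1.1) + u.1.1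
    rw [min_sub_sub_right]
    have h1 : min v.1.1 v.1.2 ≤ min (v.1.1 + u.1.1) (v.1.2 + u.1.2) :=
      min_le_min (by linarith [u.2.1]) (by linarith [u.2.2])
    have h2 : min v.1.2 u.1.1 ≤ u.1.1 := min_le_right _ _
    linarith

lemma tendsto_binv :
    Tendsto binv (cocompact Bsg) (cocompact Bsg) := by
  apply tendsto_cocompact_aux _ (fun t : Rd => Rd.ofReal (-(Rd.toReal t))) 0
  · intro v
    show (v.1.2 - v.1.1 : ℝ) = -(v.1.1 - v.1.2)
    ring
  · intro v
    show min v.1.1 v.1.2 ≤ min v.1.2 v.1.1 + 0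
    rw [min_comm, add_zero]

end Aux

/-- the one-point compactification of `B^2_{[0,∞)}`, with the extended
multiplication (with `∞` as zero), is compact Hausdorff, has separately continuous
multiplication, and continuous inversion. -/
theorem stmt14 :
    (∀ u v : Bsg, omul (Option.some u : OnePoint Bsg) (Option.some v : OnePoint Bsg)
        = (Option.some (u * v) : OnePoint Bsg)) ∧
    (∀ u : OnePoint Bsg,
        omul u OnePoint.infty = OnePoint.infty ∧ omul OnePoint.infty u = OnePoint.infty) ∧
    CompactSpace (OnePoint Bsg) ∧ T2Space (OnePoint Bsg) ∧
    (∀ u : OnePoint Bsg,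
        Continuous (fun v => omul u v) ∧ Continuous (fun v => omul v u)) ∧
    Continuous oinv := by
  refine ⟨fun u v => rfl, fun u => ⟨by cases u <;> rfl, rfl⟩, inferInstance, inferInstance,
    ?_, ?_⟩
  · intro u
    cases u with
    | infty =>
      constructor
      · exact continuous_const
      · show Continuous (fun v : OnePoint Bsg => omul v Option.none)
        have h : (fun v : OnePoint Bsg => omul v Option.none) = fun _ => OnePoint.infty := by
          funext v; cases v <;> rfl
        rw [h]; exact continuous_const
    | coe a =>
      constructor
      · show Continuous (fun v : OnePoint Bsg => omul (Option.some a) v)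
        have h : (fun v : OnePoint Bsg => omul (Option.some a) v)
            = OnePoint.map (fun b : Bsg => a * b) := by
          funext v; cases v <;> rfl
        rw [h]
        apply OnePoint.continuous_map (cont_left_mul a)
        rw [Filter.coclosedCompact_eq_cocompact]
        exact tendsto_left_mul a
      · show Continuous (fun v : OnePoint Bsg => omul v (Option.some a))
        have h : (fun v : OnePoint Bsg => omul v (Option.some a))
            = OnePoint.map (fun b : Bsg => b * a) := by
          funext v; cases v <;> rfl
        rw [h]
        apply OnePoint.continuous_map (cont_right_mul a)
        rw [Filter.coclosedCompact_eq_cocompact]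
        exact tendsto_right_mul a
  · have h : oinv = OnePoint.map Bsg.binv := by
      funext v; cases v <;> rfl
    rw [h]
    apply OnePoint.continuous_map cont_binv
    rw [Filter.coclosedCompact_eq_cocompact]
    exact tendsto_binv
end

section
/- Let S be a Hausdorff locally compact semitopological semigroup, let z ∈ S satisfy z·s = s·z = z for all s ∈ S, and let f : B_{[0,∞)} → S be an injective semigroup homomorphism with range S \ {z} which is a topological embedding of B^2_{[0,∞)} onto the subspace S \ {z}. Then either {z} is open in S, or the map F : OnePoint(B^2_{[0,∞)}) → S defined by F(∞) = z and F(x) = f(x) for x ∈ B_{[0,∞)} is a homeomorphism. -/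
open Filter Topology Set

namespace BAux

/-- signed ray coordinate -/
def gB (q : Bsg) : ℝ := q.1.2 - q.1.1
/-- position on the ray -/
def hB (q : Bsg) : ℝ := min q.1.1 q.1.2

def πB : Bsg → ℝ × ℝ := fun p => (p.1.2 - p.1.1, min p.1.1 p.1.2)

lemma hB_nonneg (q : Bsg) : 0 ≤ hB q := le_min q.2.1 q.2.2

/-- parametrization of ray δ, clamped at 0 -/
def θ (δ m : ℝ) : Bsg :=
  ⟨(max 0 m + max 0 (-δ), max 0 m + max 0 δ),
    ⟨add_nonneg (le_max_left _ _) (le_max_left _ _),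
     add_nonneg (le_max_left _ _) (le_max_left _ _)⟩⟩

def eB (t : ℝ) : Bsg := θ 0 t

lemma max_sub_max (δ : ℝ) : max 0 δ - max 0 (-δ) = δ := by
  rcases le_total 0 δ with h | h
  · rw [max_eq_right h, max_eq_left (by linarith)]; ring
  · rw [max_eq_left h, max_eq_right (by linarith)]; ring

lemma min_max_max (δ : ℝ) : min (max 0 (-δ)) (max 0 δ) = 0 := by
  rcases le_total 0 δ with h | h
  · rw [max_eq_left (by linarith : -δ ≤ 0), min_eq_left (le_max_left _ _)]
  · rw [max_eq_left h, min_eq_right (le_max_left _ _)]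

lemma g_theta (δ m : ℝ) : gB (θ δ m) = δ := by
  simp only [gB, θ]
  have := max_sub_max δ; linarith

lemma h_theta (δ m : ℝ) : hB (θ δ m) = max 0 m := by
  simp only [hB, θ, min_add_add_left, min_max_max, add_zero]

lemma theta_gh (q : Bsg) : θ (gB q) (hB q) = q := by
  obtain ⟨⟨a, b⟩, ha, hb⟩ := q
  apply Subtype.ext
  simp only [θ, gB, hB]
  rcases le_total a b with h | h
  · rw [min_eq_left h, max_eq_right ha, max_eq_left (by linarith), max_eq_right (by linarith)]
    simp
  · rw [min_eq_right h, max_eq_right hb, max_eq_right (by linarith), max_eq_left (by linarith)]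
    simp

end BAux

namespace BAux

lemma tauL_eq : (instTopologicalSpaceBsg : TopologicalSpace Bsg) =
    (TopologicalSpace.induced gB ⊥) ⊓ (TopologicalSpace.induced hB inferInstance) := by
  show tauL = _
  unfold tauL
  rw [show (@instTopologicalSpaceProd ℝ ℝ ⊥ inferInstance) =
    (TopologicalSpace.induced Prod.fst ⊥ ⊓
      TopologicalSpace.induced Prod.snd inferInstance) from rfl,
    induced_inf, induced_compose, induced_compose]
  rfl

lemma isOpen_bot' (s : Set ℝ) : IsOpen[⊥] s :=
  @isOpen_discrete ℝ ⊥ (discreteTopology_bot ℝ) s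

lemma cont_hB : Continuous hB := by
  rw [continuous_iff_le_induced, tauL_eq]
  exact inf_le_right

lemma cont_theta (δ : ℝ) : Continuous (θ δ) := by
  rw [continuous_iff_coinduced_le] at *
  rw [tauL_eq, le_inf_iff]
  constructor
  · rw [← continuous_iff_coinduced_le, continuous_induced_rng]
    rw [continuous_def]
    intro s _
    by_cases hδ : δ ∈ s
    · convert isOpen_univ using 1; ext m; simp [Function.comp, g_theta, hδ]
    · convert isOpen_empty using 1; ext m; simp [Function.comp, g_theta, hδ]
  · rw [← continuous_iff_coinduced_le, continuous_induced_rng]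
    have : Continuous fun m : ℝ => max 0 m := continuous_const.max continuous_id
    exact this.congr (fun m => (h_theta δ m).symm)

lemma isOpen_g_preimage (s : Set ℝ) : IsOpen (gB ⁻¹' s) := by
  have h1 : IsOpen[TopologicalSpace.induced gB ⊥] (gB ⁻¹' s) :=
    ⟨s, isOpen_bot' s, rfl⟩
  exact h1.mono (le_of_eq_of_le tauL_eq inf_le_left)

lemma isOpen_ray (δ : ℝ) : IsOpen {q : Bsg | gB q = δ} := isOpen_g_preimage {δ}

lemma isClosed_ray (δ : ℝ) : IsClosed {q : Bsg | gB q = δ} := by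
  rw [← isOpen_compl_iff]
  exact isOpen_g_preimage ({δ}ᶜ)

lemma isCompact_trunc (δ M : ℝ) : IsCompact {q : Bsg | gB q = δ ∧ hB q ≤ M} := by
  have himg : {q : Bsg | gB q = δ ∧ hB q ≤ M} = θ δ '' Set.Icc 0 M := by
    ext q
    constructor
    · rintro ⟨hg, hh⟩
      exact ⟨hB q, ⟨hB_nonneg q, hh⟩, by rw [← hg, theta_gh]⟩
    · rintro ⟨m, ⟨h0, hM⟩, rfl⟩
      refine ⟨g_theta _ _, ?_⟩
      rw [h_theta, max_eq_right h0]; exact hM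
  rw [himg]
  exact isCompact_Icc.image (cont_theta δ)

lemma isCompact_fin {A : Set ℝ} (hA : A.Finite) (M : ℝ) :
    IsCompact {q : Bsg | gB q ∈ A ∧ hB q ≤ M} := by
  have : {q : Bsg | gB q ∈ A ∧ hB q ≤ M} = ⋃ δ ∈ A, {q : Bsg | gB q = δ ∧ hB q ≤ M} := by
    ext q; simp only [Set.mem_setOf_eq, Set.mem_iUnion]
    constructor
    · rintro ⟨h1, h2⟩; exact ⟨gB q, h1, rfl, h2⟩
    · rintro ⟨δ, hδ, rfl, h2⟩; exact ⟨hδ, h2⟩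
  rw [this]
  exact hA.isCompact_biUnion (fun δ _ => isCompact_trunc δ M)

lemma bdd_hB_of_compact {K : Set Bsg} (hK : IsCompact K) : ∃ M, ∀ q ∈ K, hB q ≤ M := by
  obtain ⟨M, hM⟩ := (hK.image cont_hB).bddAbove
  exact ⟨M, fun q hq => hM ⟨q, hq, rfl⟩⟩

lemma finite_gB_of_compact {K : Set Bsg} (hK : IsCompact K) : (gB '' K).Finite := by
  obtain ⟨t, ht⟩ := hK.elim_finite_subcover (fun δ : ℝ => {q : Bsg | gB q = δ})
    (fun δ => isOpen_ray δ) (fun q _ => Set.mem_iUnion.2 ⟨gB q, rfl⟩)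
  refine t.finite_toSet.subset ?_
  rintro δ ⟨q, hq, rfl⟩
  obtain ⟨i, hi, hqi⟩ := Set.mem_iUnion₂.1 (ht hq)
  exact hqi ▸ hi

end BAux

namespace BAux

lemma mul_def (u v : Bsg) : u * v = Bsg.bmul u v := rfl

lemma mul_fst (u v : Bsg) : (u * v).1.1 = u.1.1 + v.1.1 - min u.1.2 v.1.1 := rfl
lemma mul_snd (u v : Bsg) : (u * v).1.2 = u.1.2 + v.1.2 - min u.1.2 v.1.1 := rfl

lemma fst_le_mul (u v : Bsg) : u.1.1 ≤ (u * v).1.1 := by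
  rw [mul_fst]; have := min_le_right u.1.2 v.1.1; linarith
lemma snd_le_mul (u v : Bsg) : v.1.2 ≤ (u * v).1.2 := by
  rw [mul_snd]; have := min_le_left u.1.2 v.1.1; linarith

lemma theta_fst (δ m : ℝ) : (θ δ m).1.1 = max 0 m + max 0 (-δ) := rfl
lemma theta_snd (δ m : ℝ) : (θ δ m).1.2 = max 0 m + max 0 δ := rfl

lemma eB_fst (t : ℝ) : (eB t).1.1 = max 0 t := by
  rw [eB, theta_fst, neg_zero, max_self, add_zero]
lemma eB_snd (t : ℝ) : (eB t).1.2 = max 0 t := by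
  rw [eB, theta_snd, max_self, add_zero]

/-- `θ δ m * θ (-δ) M = e_{m + max 0 (-δ)}` for `0 ≤ M ≤ m`. -/
lemma theta_mul_inv (δ m M : ℝ) (hM : 0 ≤ M) (hm : M ≤ m) :
    θ δ m * θ (-δ) M = eB (m + max 0 (-δ)) := by
  have h0m : (0:ℝ) ≤ m := hM.trans hm
  apply Subtype.ext
  rw [Prod.ext_iff]
  rw [mul_fst, mul_snd, theta_fst, theta_snd, theta_fst, theta_snd, eB_fst, eB_snd]
  rw [max_eq_right h0m, max_eq_right hM, neg_neg,
    max_eq_right (by positivity : (0:ℝ) ≤ m + max 0 (-δ))]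
  rw [min_eq_right (by have := le_max_left 0 δ; linarith : M + max 0 δ ≤ m + max 0 δ)]
  constructor <;> ring

/-- `e_t * θ δ' 0 = θ δ' (t - max 0 (-δ'))` for `t ≥ max 0 (-δ')`. -/
lemma eB_mul_theta (δ' t : ℝ) (ht : max 0 (-δ') ≤ t) :
    eB t * θ δ' 0 = θ δ' (t - max 0 (-δ')) := by
  have h0t : (0:ℝ) ≤ t := (le_max_left _ _).trans ht
  apply Subtype.ext
  rw [Prod.ext_iff]
  rw [mul_fst, mul_snd, eB_fst, eB_snd, theta_fst, theta_snd, theta_fst, theta_snd]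
  rw [max_eq_right h0t, max_self, zero_add, zero_add,
    max_eq_right (by linarith : (0:ℝ) ≤ t - max 0 (-δ'))]
  rw [min_eq_right ht]
  have := max_sub_max δ'
  constructor <;> linarith

lemma hB_sandwich (t : ℝ) (x : Bsg) : t ≤ hB ((eB t * x) * eB t) := by
  have h1 : (eB t).1.1 ≤ ((eB t * x) * eB t).1.1 :=
    le_trans (fst_le_mul (eB t) x) (fst_le_mul _ _)
  have h2 : (eB t).1.2 ≤ ((eB t * x) * eB t).1.2 := snd_le_mul _ _
  have h3 : t ≤ max 0 t := le_max_right _ _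
  rw [eB_fst] at h1; rw [eB_snd] at h2
  exact le_min (by linarith) (by linarith)

end BAux

namespace BAux

open Filter Topology Set

set_option linter.unusedSectionVars false

lemma conn {V C : Set Bsg} (δ c : ℝ) (hVo : IsOpen V) (hCc : IsClosed C) (hVC : V ⊆ C)
    (hD : ∀ m', c < m' → θ δ m' ∈ C → θ δ m' ∈ V)
    (hne : ∃ m', c < m' ∧ θ δ m' ∈ V) :
    ∀ m', c < m' → θ δ m' ∈ V := by
  by_contra hcon
  push_neg at hcon
  obtain ⟨m₀, hm₀, hm₀V⟩ := hcon
  obtain ⟨m₁, hm₁⟩ := isPreconnected_Ioi (a := c) (θ δ ⁻¹' V) ((θ δ ⁻¹' C)ᶜ)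
    (hVo.preimage (cont_theta δ)) ((hCc.preimage (cont_theta δ)).isOpen_compl)
    (by
      intro m hm
      by_cases hC : θ δ m ∈ C
      · exact Or.inl (hD m hm hC)
      · exact Or.inr hC)
    ⟨hne.choose, hne.choose_spec.1, hne.choose_spec.2⟩
    ⟨m₀, hm₀, fun hC => hm₀V (hD m₀ hm₀ hC)⟩
  exact absurd (hVC hm₁.2.1) hm₁.2.2

section Main

variable {S : Type*} [TopologicalSpace S] [T2Space S] [LocallyCompactSpace S] [Semigroup S]
  (hsep : ∀ a : S, Continuous (fun x : S => a * x) ∧ Continuous (fun x : S => x * a))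
  (z : S) (hz : ∀ s : S, z * s = z ∧ s * z = z)
  (f : Bsg → S) (hinj : Function.Injective f)
  (hhom : ∀ u v : Bsg, f (u * v) = f u * f v)
  (hrange : Set.range f = ({z}ᶜ : Set S))
  (hemb : Topology.IsEmbedding f)

include hsep hz hhom hrange hemb

lemma core {K : Set S} (hK : IsCompact K) (F : Ultrafilter Bsg)
    (hmem : f ⁻¹' K ∈ F) (hno : ∀ x : Bsg, ¬ (F : Filter Bsg) ≤ 𝓝 x) :
    Filter.Tendsto f (F : Filter Bsg) (𝓝 z) := by
  have hle : (F.map f : Filter S) ≤ 𝓟 K := by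
    rw [Filter.le_principal_iff]
    exact Filter.mem_map.2 hmem
  obtain ⟨y, hyK, hy⟩ := hK.ultrafilter_le_nhds (F.map f) hle
  rcases eq_or_ne y z with rfl | hne
  · exact hy
  · exfalso
    have hyr : y ∈ Set.range f := by rw [hrange]; exact hne
    obtain ⟨x, rfl⟩ := hyr
    apply hno x
    calc (F : Filter Bsg) ≤ Filter.comap f (Filter.map f (F : Filter Bsg)) :=
          Filter.le_comap_map
    _ ≤ Filter.comap f (𝓝 (f x)) := Filter.comap_mono hy
    _ = 𝓝 x := (hemb.toIsInducing.nhds_eq_comap x).symm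

lemma app1 {K W : Set S} (hK : IsCompact K) (hWo : IsOpen W) (hzW : z ∈ W) :
    IsCompact (f ⁻¹' K \ f ⁻¹' W) := by
  rw [isCompact_iff_ultrafilter_le_nhds]
  intro F hF
  rw [Filter.le_principal_iff] at hF
  by_contra hcon
  push_neg at hcon
  have hclosed : IsClosed (f ⁻¹' K \ f ⁻¹' W) :=
    (hK.isClosed.preimage hemb.continuous).sdiff (hWo.preimage hemb.continuous)
  have hno : ∀ x : Bsg, ¬(F : Filter Bsg) ≤ 𝓝 x := by
    intro x hx
    have hxmem : x ∈ f ⁻¹' K \ f ⁻¹' W := by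
      rw [← hclosed.closure_eq]
      exact mem_closure_iff_clusterPt.2
        (Filter.neBot_of_le (le_inf hx (Filter.le_principal_iff.2 hF)))
    exact hcon x hxmem hx
  have ht := core hsep z hz f hhom hrange hemb hK F
    (Filter.mem_of_superset hF Set.diff_subset) hno
  have h1 : f ⁻¹' W ∈ F := ht (hWo.mem_nhds hzW)
  have h2 : (f ⁻¹' K \ f ⁻¹' W) ∩ f ⁻¹' W ∈ F := Filter.inter_mem hF h1
  have h3 : (f ⁻¹' K \ f ⁻¹' W) ∩ f ⁻¹' W = ∅ := by
    ext q; simp only [Set.mem_inter_iff, Set.mem_diff, Set.mem_empty_iff_false, iff_false]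
    rintro ⟨⟨-, hq⟩, hq'⟩; exact hq hq'
  rw [h3] at h2
  exact Filter.empty_notMem (F : Filter Bsg) h2

variable (hnop : ¬ IsOpen ({z} : Set S))
include hnop

lemma mem_closure_compl : z ∈ closure ({z}ᶜ : Set S) := by
  by_contra h
  apply hnop
  rw [← isClosed_compl_iff]
  have he : closure ({z}ᶜ : Set S) = {z}ᶜ := by
    apply Set.Subset.antisymm _ subset_closure
    intro y hy
    rcases eq_or_ne y z with rfl | hne
    · exact absurd hy h
    · exact hne
  rw [← he]; exact isClosed_closure

omit hnop in
lemma push_left (u : Bsg) {A : Set Bsg} (hA : z ∈ closure (f '' A)) :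
    z ∈ closure (f '' ((fun x => u * x) '' A)) := by
  have hc : Continuous (fun s : S => f u * s) := (hsep (f u)).1
  have h1 : (fun s : S => f u * s) '' closure (f '' A) ⊆
      closure ((fun s : S => f u * s) '' (f '' A)) :=
    image_closure_subset_closure_image hc
  have h2 : (fun s : S => f u * s) '' (f '' A) = f '' ((fun x => u * x) '' A) := by
    rw [Set.image_image, Set.image_image]
    exact Set.image_congr (fun x _ => (hhom u x).symm)
  have h3 : f u * z ∈ closure ((fun s : S => f u * s) '' (f '' A)) := h1 ⟨z, hA, rfl⟩
  rw [h2] at h3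
  rwa [(hz (f u)).2] at h3

omit hnop in
lemma push_right (u : Bsg) {A : Set Bsg} (hA : z ∈ closure (f '' A)) :
    z ∈ closure (f '' ((fun x => x * u) '' A)) := by
  have hc : Continuous (fun s : S => s * f u) := (hsep (f u)).2
  have h1 : (fun s : S => s * f u) '' closure (f '' A) ⊆
      closure ((fun s : S => s * f u) '' (f '' A)) :=
    image_closure_subset_closure_image hc
  have h2 : (fun s : S => s * f u) '' (f '' A) = f '' ((fun x => x * u) '' A) := by
    rw [Set.image_image, Set.image_image]
    exact Set.image_congr (fun x _ => (hhom x u).symm)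
  have h3 : z * f u ∈ closure ((fun s : S => s * f u) '' (f '' A)) := h1 ⟨z, hA, rfl⟩
  rw [h2] at h3
  rwa [(hz (f u)).1] at h3

lemma q1 (t : ℝ) : z ∈ closure (f '' {q : Bsg | t ≤ hB q}) := by
  have h0 : z ∈ closure (f '' (Set.univ : Set Bsg)) := by
    rw [Set.image_univ, hrange]
    exact mem_closure_compl hsep z hz f hhom hrange hemb hnop
  have h1 := push_left hsep z hz f hhom hrange hemb (eB t) h0
  have h2 := push_right hsep z hz f hhom hrange hemb (eB t) h1
  refine closure_mono (Set.image_mono ?_) h2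
  rintro q ⟨x, ⟨y, -, rfl⟩, rfl⟩
  exact hB_sandwich t y

lemma q2 {K : Set S} (hK : IsCompact K) (hKz : K ∈ 𝓝 z) :
    ∃ δ M, 0 ≤ M ∧ ∀ m, M ≤ m → f (θ δ m) ∈ interior K := by
  have hVo : IsOpen (f ⁻¹' interior K) := isOpen_interior.preimage hemb.continuous
  have hCc : IsClosed (f ⁻¹' K) := hK.isClosed.preimage hemb.continuous
  have hVC : f ⁻¹' interior K ⊆ f ⁻¹' K := Set.preimage_mono interior_subset
  have hDcpt : IsCompact (f ⁻¹' K \ f ⁻¹' interior K) :=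
    app1 hsep z hz f hhom hrange hemb hK isOpen_interior (mem_interior_iff_mem_nhds.2 hKz)
  obtain ⟨M₀, hM₀⟩ := bdd_hB_of_compact hDcpt
  set c := max M₀ 0 with hc
  have hzint : interior K ∈ 𝓝 z := isOpen_interior.mem_nhds (mem_interior_iff_mem_nhds.2 hKz)
  have h1 := q1 hsep z hz f hhom hrange hemb hnop (c + 1)
  rw [mem_closure_iff_nhds] at h1
  obtain ⟨y, hyint, q₀, hq₀, rfl⟩ := h1 (interior K) hzint
  have hq₀' : c + 1 ≤ hB q₀ := hq₀
  have key : ∀ m', c < m' → θ (gB q₀) m' ∈ f ⁻¹' interior K := by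
    apply conn (gB q₀) c hVo hCc hVC
    · intro m' hm' hmC
      by_contra hmV
      have hd := hM₀ _ ⟨hmC, hmV⟩
      rw [h_theta] at hd
      have h5 : m' ≤ max 0 m' := le_max_right 0 m'
      have h6 : M₀ ≤ c := le_max_left M₀ 0
      linarith
    · refine ⟨hB q₀, by linarith, ?_⟩
      rw [theta_gh]
      exact hyint
  exact ⟨gB q₀, c + 1, by positivity, fun m hm => key m (by linarith)⟩

lemma q3 {W : Set S} (hW : W ∈ 𝓝 z) (M₀ : ℝ) : ∃ t, M₀ ≤ t ∧ f (eB t) ∈ W := by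
  obtain ⟨K, hKz, hKW, hK⟩ := local_compact_nhds hW
  obtain ⟨δ, M, hM0, htail⟩ := q2 hsep z hz f hhom hrange hemb hnop hK hKz
  obtain ⟨G, hG⟩ := Filter.exists_ultrafilter_le (Filter.map (θ δ) Filter.atTop)
  have hGmem : ∀ T : ℝ, {q : Bsg | ∃ m, T ≤ m ∧ θ δ m = q} ∈ G := by
    intro T
    apply hG
    rw [Filter.mem_map]
    filter_upwards [Filter.Ici_mem_atTop T] with m hm
    exact ⟨m, hm, rfl⟩
  have hGK : f ⁻¹' K ∈ G := by
    refine Filter.mem_of_superset (hGmem M) ?_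
    rintro q ⟨m, hm, rfl⟩
    exact Set.mem_preimage.2 (interior_subset (htail m hm))
  have hno : ∀ x : Bsg, ¬(G : Filter Bsg) ≤ 𝓝 x := by
    intro x hx
    have h1 : Filter.Tendsto hB (G : Filter Bsg) (𝓝 (hB x)) :=
      (cont_hB.tendsto x).mono_left hx
    have h2 : Filter.Tendsto hB (G : Filter Bsg) Filter.atTop := by
      refine Filter.Tendsto.mono_left ?_ hG
      rw [Filter.tendsto_map'_iff]
      have : ∀ m : ℝ, m ≤ hB (θ δ m) := by
        intro m; rw [h_theta]; exact le_max_right 0 m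
      exact Filter.tendsto_atTop_mono this Filter.tendsto_id
    have h3 : Filter.NeBot (𝓝 (hB x) ⊓ Filter.atTop) :=
      Filter.neBot_of_le (le_inf h1 h2)
    exact h3.ne ((disjoint_nhds_atTop (hB x)).eq_bot)
  have hT := core hsep z hz f hhom hrange hemb hK G hGK hno
  have hcontw : Filter.Tendsto (fun s : S => s * f (θ (-δ) M)) (𝓝 z) (𝓝 z) := by
    have h4 := ((hsep (f (θ (-δ) M))).2).tendsto z
    rwa [(hz (f (θ (-δ) M))).1] at h4
  have hTz : Filter.Tendsto (fun q : Bsg => f (q * θ (-δ) M)) (G : Filter Bsg) (𝓝 z) :=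
    Filter.Tendsto.congr (fun q => (hhom q (θ (-δ) M)).symm) (hcontw.comp hT)
  have hWmem : {q : Bsg | f (q * θ (-δ) M) ∈ W} ∈ G := hTz hW
  obtain ⟨q, hqW, m, hm, rfl⟩ :=
    Ultrafilter.nonempty_of_mem (Filter.inter_mem hWmem (hGmem (max M M₀)))
  refine ⟨m + max 0 (-δ), ?_, ?_⟩
  · have h5 := le_max_left 0 (-δ)
    have h6 := le_max_right M M₀
    linarith
  · rw [← theta_mul_inv δ m M hM0 (le_trans (le_max_left M M₀) hm)]
    exact hqW

lemma q4 (δ' : ℝ) {W : Set S} (hW : W ∈ 𝓝 z) (M₀ : ℝ) :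
    ∃ m, M₀ ≤ m ∧ f (θ δ' m) ∈ W := by
  have hcontv : Filter.Tendsto (fun s : S => s * f (θ δ' 0)) (𝓝 z) (𝓝 z) := by
    have h4 := ((hsep (f (θ δ' 0))).2).tendsto z
    rwa [(hz (f (θ δ' 0))).1] at h4
  have hP : (fun s : S => s * f (θ δ' 0)) ⁻¹' W ∈ 𝓝 z := hcontv hW
  obtain ⟨t, ht, htW⟩ := q3 hsep z hz f hhom hrange hemb hnop hP (max M₀ 0 + max 0 (-δ'))
  have h5 : max 0 (-δ') ≤ t := by
    have := le_max_right M₀ 0; linarith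
  refine ⟨t - max 0 (-δ'), ?_, ?_⟩
  · have := le_max_left M₀ 0; linarith
  · have h6 : f (eB t) * f (θ δ' 0) ∈ W := htW
    rw [← hhom, eB_mul_theta δ' t h5] at h6
    exact h6

lemma main_cpt {K : Set S} (hK : IsCompact K) (hKz : K ∈ 𝓝 z) :
    IsCompact ((f ⁻¹' interior K)ᶜ : Set Bsg) := by
  have hVo : IsOpen (f ⁻¹' interior K) := isOpen_interior.preimage hemb.continuous
  have hCc : IsClosed (f ⁻¹' K) := hK.isClosed.preimage hemb.continuous
  have hVC : f ⁻¹' interior K ⊆ f ⁻¹' K := Set.preimage_mono interior_subset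
  have hDcpt : IsCompact (f ⁻¹' K \ f ⁻¹' interior K) :=
    app1 hsep z hz f hhom hrange hemb hK isOpen_interior (mem_interior_iff_mem_nhds.2 hKz)
  obtain ⟨M₀, hM₀⟩ := bdd_hB_of_compact hDcpt
  have hAfin : (gB '' (f ⁻¹' K \ f ⁻¹' interior K)).Finite := finite_gB_of_compact hDcpt
  refine IsCompact.of_isClosed_subset (isCompact_fin hAfin (max M₀ 0))
    hVo.isClosed_compl ?_
  intro q hq
  by_contra hqZ
  apply hq
  have hzint : interior K ∈ 𝓝 z := isOpen_interior.mem_nhds (mem_interior_iff_mem_nhds.2 hKz)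
  have hkey : ∀ c : ℝ, (∀ m', c < m' → θ (gB q) m' ∈ f ⁻¹' K \ f ⁻¹' interior K → False) →
      c < hB q → q ∈ f ⁻¹' interior K := by
    intro c hno hlt
    have h7 : ∀ m', c < m' → θ (gB q) m' ∈ f ⁻¹' interior K := by
      apply conn (gB q) c hVo hCc hVC
      · intro m' hm' hmC
        by_contra hv
        exact hno m' hm' ⟨hmC, hv⟩
      · obtain ⟨m', hm', hmV⟩ := q4 hsep z hz f hhom hrange hemb hnop (gB q) hzint (c + 1)
        exact ⟨m', by linarith, hmV⟩
    have h8 := h7 (hB q) hlt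
    rwa [theta_gh q] at h8
  simp only [Set.mem_setOf_eq, not_and, not_le] at hqZ
  by_cases hA : gB q ∈ gB '' (f ⁻¹' K \ f ⁻¹' interior K)
  · refine hkey (max M₀ 0) ?_ (hqZ hA)
    intro m' hm' hD
    have h9 := hM₀ _ hD
    rw [h_theta] at h9
    have h10 : m' ≤ max 0 m' := le_max_right 0 m'
    have h11 : M₀ ≤ max M₀ 0 := le_max_left M₀ 0
    linarith
  · refine hkey (-1) ?_ (by linarith [hB_nonneg q])
    intro m' _ hD
    exact hA ⟨θ (gB q) m', hD, g_theta _ _⟩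

end Main
end BAux

/-- if `S` is a Hausdorff locally compact semitopological semigroup which is
`B^2_{[0,∞)}` with an adjoined zero `z`, then either `{z}` is open or `S` is the one-point
compactification of `B^2_{[0,∞)}` (via the canonical map). -/
theorem stmt15 {S : Type*} [TopologicalSpace S] [T2Space S] [LocallyCompactSpace S] [Semigroup S]
    (hsep : ∀ a : S, Continuous (fun x : S => a * x) ∧ Continuous (fun x : S => x * a))
    (z : S) (hz : ∀ s : S, z * s = z ∧ s * z = z)
    (f : Bsg → S) (hinj : Function.Injective f)
    (hhom : ∀ u v : Bsg, f (u * v) = f u * f v)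
    (hrange : Set.range f = ({z}ᶜ : Set S))
    (hemb : Topology.IsEmbedding f) :
    IsOpen ({z} : Set S) ∨
      IsHomeomorph (fun u : OnePoint Bsg => Option.elim u z f) := by
  classical
  by_cases hop : IsOpen ({z} : Set S)
  · exact Or.inl hop
  · right
    have hfz : ∀ x : Bsg, f x ≠ z := by
      intro x
      have : f x ∈ ({z}ᶜ : Set S) := hrange ▸ Set.mem_range_self x
      exact this
    have hcont : Continuous (fun u : OnePoint Bsg => Option.elim u z f) := by
      rw [OnePoint.continuous_iff]
      constructor
      · rw [Filter.tendsto_def]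
        intro W hW
        have hW' : W ∈ 𝓝 z := hW
        obtain ⟨K, hKz, hKW, hK⟩ := local_compact_nhds hW'
        simp only [Filter.hasBasis_coclosedCompact.mem_iff, and_assoc]
        refine ⟨(f ⁻¹' interior K)ᶜ,
          (isOpen_interior.preimage hemb.continuous).isClosed_compl,
          BAux.main_cpt hsep z hz f hhom hrange hemb hop hK hKz, ?_⟩
        rw [compl_compl]
        intro q hq
        exact hKW (interior_subset hq)
      · exact hemb.continuous
    have hbij : Function.Bijective (fun u : OnePoint Bsg => Option.elim u z f) := by
      constructor
      · intro a b hab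
        cases a with
        | infty =>
          cases b with
          | infty => rfl
          | coe y => exact absurd hab.symm (hfz y)
        | coe x =>
          cases b with
          | infty => exact absurd hab (hfz x)
          | coe y => exact congrArg _ (hinj hab)
      · intro s
        rcases eq_or_ne s z with rfl | hs
        · exact ⟨none, rfl⟩
        · have : s ∈ Set.range f := by rw [hrange]; exact hs
          obtain ⟨x, rfl⟩ := this
          exact ⟨some x, rfl⟩
    exact isHomeomorph_iff_continuous_bijective.2 ⟨hcont, hbij⟩
end

section
/- Let S be the semigroup B^2_{[0,∞)} with an adjoined compact ideal I, and assume in addition that the multiplication of S is jointly continuous (S is a topological semigroup). Then I is an open subset of S. -/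
namespace Bsg

/-- the ray coordinate `δ`. -/
def dd (p : Bsg) : ℝ := p.1.2 - p.1.1

/-- the position coordinate `μ = min`. -/
def mm (p : Bsg) : ℝ := min p.1.1 p.1.2

lemma mm_nonneg (p : Bsg) : 0 ≤ mm p := le_min p.2.1 p.2.2

/-- parametrization of the ray with δ-value `r`. -/
def gam (r x : ℝ) : Bsg :=
  ⟨(max x 0 + max (-r) 0, max x 0 + max r 0),
    ⟨add_nonneg (le_max_right _ _) (le_max_right _ _),
     add_nonneg (le_max_right _ _) (le_max_right _ _)⟩⟩

lemma dd_gam (r x : ℝ) : dd (gam r x) = r := by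
  simp only [dd, gam]
  rcases le_total r 0 with h | h
  · rw [max_eq_right h, max_eq_left (neg_nonneg.2 h)]; ring
  · rw [max_eq_left h, max_eq_right (neg_nonpos.2 h)]; ring

lemma mm_gam (r x : ℝ) : mm (gam r x) = max x 0 := by
  simp only [mm, gam, min_def, max_def]
  split_ifs <;> linarith

lemma gam_eq_self (p : Bsg) : gam (dd p) (mm p) = p := by
  have h1 := p.2.1; have h2 := p.2.2
  apply Subtype.ext
  apply Prod.ext <;>
    simp only [gam, dd, mm, min_def, max_def] <;> split_ifs <;> linarith

lemma cont_F : @Continuous Bsg (ℝ × ℝ) _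
    (@instTopologicalSpaceProd ℝ ℝ ⊥ inferInstance)
    (fun p : Bsg => ((p.1.2 - p.1.1, min p.1.1 p.1.2) : ℝ × ℝ)) :=
  continuous_induced_dom

lemma isOpen_ray (u : ℝ) : IsOpen {p : Bsg | dd p = u} := by
  haveI : @DiscreteTopology ℝ ⊥ := discreteTopology_bot ℝ
  have ho : @IsOpen (ℝ × ℝ) (@instTopologicalSpaceProd ℝ ℝ ⊥ inferInstance)
      ({u} ×ˢ (Set.univ : Set ℝ)) :=
    @IsOpen.prod ℝ ℝ ⊥ inferInstance _ _ (@isOpen_discrete ℝ ⊥ this {u}) isOpen_univ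
  have he : {p : Bsg | dd p = u}
      = (fun p : Bsg => ((p.1.2 - p.1.1, min p.1.1 p.1.2) : ℝ × ℝ)) ⁻¹'
        ({u} ×ˢ (Set.univ : Set ℝ)) := by
    ext p
    simp only [Set.mem_setOf_eq, Set.mem_preimage, Set.mem_prod, Set.mem_singleton_iff,
      Set.mem_univ, and_true, dd]
  rw [he]
  exact @IsOpen.preimage Bsg (ℝ × ℝ) _ (@instTopologicalSpaceProd ℝ ℝ ⊥ inferInstance) _
    cont_F _ ho

lemma continuous_mm : Continuous mm :=
  @Continuous.comp Bsg (ℝ × ℝ) ℝ _ (@instTopologicalSpaceProd ℝ ℝ ⊥ inferInstance) _ _ _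
    (@continuous_snd ℝ ℝ ⊥ inferInstance) cont_F

lemma continuous_gam (r : ℝ) : Continuous (gam r) := by
  apply continuous_induced_rng.2
  have he : ((fun p : Bsg => ((p.1.2 - p.1.1, min p.1.1 p.1.2) : ℝ × ℝ)) ∘ gam r)
      = fun x : ℝ => ((r, max x 0) : ℝ × ℝ) := by
    funext x
    have h1 := dd_gam r x
    have h2 := mm_gam r x
    simp only [dd] at h1
    simp only [mm] at h2
    simp only [Function.comp]
    rw [h1, h2]
  rw [he]
  exact @Continuous.prodMk ℝ ℝ ℝ ⊥ inferInstance inferInstance _ _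
    (@continuous_const ℝ ℝ inferInstance ⊥ r) (continuous_id.max continuous_const)

/-- coordinates of products -/
lemma mul_fst (u v : Bsg) : (u * v).1.1 = u.1.1 + v.1.1 - min u.1.2 v.1.1 := rfl
lemma mul_snd (u v : Bsg) : (u * v).1.2 = u.1.2 + v.1.2 - min u.1.2 v.1.1 := rfl

/-- the identity element `(0,0)` -/
def e0 : Bsg := ⟨(0, 0), le_refl 0, le_refl 0⟩

lemma gam_cancel (p : ℝ) (hp : 0 ≤ p) : gam p 0 * gam (-p) 0 = e0 := by
  have h1 : gam p 0 = ⟨(0, p), le_refl 0, hp⟩ := by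
    apply Subtype.ext
    apply Prod.ext <;>
      simp [gam, max_eq_left hp, max_eq_right (neg_nonpos.2 hp)]
  have h2 : gam (-p) 0 = ⟨(p, 0), hp, le_refl 0⟩ := by
    apply Subtype.ext
    apply Prod.ext <;>
      simp [gam, max_eq_left hp, max_eq_right (neg_nonpos.2 hp), neg_neg]
  rw [h1, h2]
  apply Subtype.ext
  apply Prod.ext <;> simp [mul_fst, mul_snd, e0]

lemma dd_shift_mul (t r x : ℝ) (hx : max t 0 ≤ x) :
    dd (gam t 0 * gam r x) = r + t := by
  have hx0 : 0 ≤ x := le_trans (le_max_right _ _) hx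
  have hmaxr : max r 0 - max (-r) 0 = r := by
    rcases le_total r 0 with h | h
    · rw [max_eq_right h, max_eq_left (neg_nonneg.2 h)]; ring
    · rw [max_eq_left h, max_eq_right (neg_nonpos.2 h)]; ring
  have hmin : min (gam t 0).1.2 (gam r x).1.1 = max (0:ℝ) 0 + max t 0 := by
    apply min_eq_left
    show max (0:ℝ) 0 + max t 0 ≤ max x 0 + max (-r) 0
    have h3 := le_max_right (-r) (0:ℝ)
    rw [max_self, max_eq_left hx0]
    linarith
  simp only [dd, mul_fst, mul_snd, hmin]
  show (gam t 0).1.2 + (gam r x).1.2 - (max (0:ℝ) 0 + max t 0)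
      - ((gam t 0).1.1 + (gam r x).1.1 - (max (0:ℝ) 0 + max t 0)) = r + t
  have hg1 : (gam t 0).1.2 - (gam t 0).1.1 = t := by
    have := dd_gam t 0; simpa [dd] using this
  have hg2 : (gam r x).1.2 - (gam r x).1.1 = r := by
    have := dd_gam r x; simpa [dd] using this
  linarith

end Bsg

/-- if in addition the multiplication of `S` is jointly continuous, then `I`
is open. -/
theorem stmt16 {S : Type*} [TopologicalSpace S] [T2Space S] [LocallyCompactSpace S] [Semigroup S]
    (hsep : ∀ a : S, Continuous (fun x : S => a * x) ∧ Continuous (fun x : S => x * a))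
    (I : Set S) (hne : I.Nonempty) (hIcomp : IsCompact I)
    (hIdeal : ∀ s : S, ∀ a ∈ I, s * a ∈ I ∧ a * s ∈ I)
    (f : Bsg → S) (hinj : Function.Injective f)
    (hhom : ∀ u v : Bsg, f (u * v) = f u * f v)
    (hrange : Set.range f = Iᶜ)
    (hemb : Topology.IsEmbedding f)
    (hjoint : Continuous (fun p : S × S => p.1 * p.2)) :
    IsOpen I := by
  classical
  by_contra hIopen
  have hIclosed : IsClosed I := hIcomp.isClosed
  have hfc : Continuous f := hemb.continuous
  obtain ⟨K', hK'cpt, hK'sub⟩ := exists_compact_superset hIcomp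
  set U₀ : Set S := interior K' with hU₀def
  set D₀ : Set Bsg := f ⁻¹' K' with hD₀def
  set G : Set Bsg := f ⁻¹' U₀ with hGdef
  have hGD : G ⊆ D₀ := by
    rw [hGdef, hD₀def, hU₀def]
    exact Set.preimage_mono interior_subset
  have hGopen : IsOpen G := isOpen_interior.preimage hfc
  have hD₀closed : IsClosed D₀ := hK'cpt.isClosed.preimage hfc
  -- preimages of compact sets disjoint from I are compact
  have hpre : ∀ C : Set S, IsCompact C → (∀ x ∈ C, x ∉ I) → IsCompact (f ⁻¹' C) := by
    intro C hC hdisj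
    have hsub : C ⊆ Set.range f := by
      rw [hrange]; intro x hx; exact hdisj x hx
    exact hemb.isCompact_iff.2
      (by rw [Set.image_preimage_eq_of_subset hsub]; exact hC)
  -- the boundary of the trace is compact
  have hbd : IsCompact (D₀ \ G) := by
    have hEq : D₀ \ G = f ⁻¹' (K' \ U₀) := by
      rw [hD₀def, hGdef, Set.preimage_diff]
    rw [hEq]
    refine hpre _ (hK'cpt.diff isOpen_interior) ?_
    intro x hx hxI
    exact hx.2 (hK'sub hxI)
  -- J₀: a finite set of rays covering the boundary
  obtain ⟨J₀, hJ₀⟩ := hbd.elim_finite_subcover (fun r : ℝ => {p : Bsg | Bsg.dd p = r})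
    (fun r => Bsg.isOpen_ray r) (fun p _ => Set.mem_iUnion.2 ⟨Bsg.dd p, rfl⟩)
  have hJ₀mem : ∀ p ∈ D₀ \ G, Bsg.dd p ∈ J₀ := by
    intro p hp
    rcases Set.mem_iUnion₂.1 (hJ₀ hp) with ⟨r, hrJ, hpr⟩
    have hdd : Bsg.dd p = r := hpr
    rw [hdd]; exact hrJ
  -- M3: a ray avoiding the boundary rays which meets G is entirely inside D₀
  have hfull : ∀ u : ℝ, (∀ p ∈ D₀ \ G, Bsg.dd p ≠ u) → (∃ q ∈ G, Bsg.dd q = u) →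
      ∀ x : ℝ, Bsg.gam u x ∈ D₀ := by
    intro u hu hq x
    obtain ⟨q₀, hq₀G, hq₀d⟩ := hq
    haveI : PreconnectedSpace (Set.Ici (0:ℝ)) := Subtype.preconnectedSpace isPreconnected_Ici
    set g : Set.Ici (0:ℝ) → Bsg := fun y => Bsg.gam u y.1 with hg
    have hgc : Continuous g := (Bsg.continuous_gam u).comp continuous_subtype_val
    have hA : g ⁻¹' D₀ = g ⁻¹' G := by
      apply Set.Subset.antisymm
      · intro y hy
        by_contra hnG
        exact hu _ ⟨hy, hnG⟩ (Bsg.dd_gam u y.1)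
      · intro y hy; exact hGD hy
    have hclopen : IsClopen (g ⁻¹' D₀) :=
      ⟨hD₀closed.preimage hgc, by rw [hA]; exact hGopen.preimage hgc⟩
    have hne2 : (g ⁻¹' D₀).Nonempty := by
      refine ⟨⟨Bsg.mm q₀, Set.mem_Ici.2 (Bsg.mm_nonneg q₀)⟩, ?_⟩
      show Bsg.gam u (Bsg.mm q₀) ∈ D₀
      have heq : Bsg.gam u (Bsg.mm q₀) = q₀ := by
        rw [← hq₀d]; exact Bsg.gam_eq_self q₀
      rw [heq]; exact hGD hq₀G
    have huniv := hclopen.eq_univ hne2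
    have hclamp : Bsg.gam u x = Bsg.gam u (max x 0) := by
      apply Subtype.ext
      apply Prod.ext <;> simp [Bsg.gam, max_eq_left (le_max_right x 0)]
    have hmem : (⟨max x 0, Set.mem_Ici.2 (le_max_right x 0)⟩ : Set.Ici (0:ℝ)) ∈ g ⁻¹' D₀ := by
      rw [huniv]; exact Set.mem_univ _
    rw [hclamp]; exact hmem
  -- M1: some ray meets D₀ in an unbounded set
  have hex : ∃ r : ℝ, ∀ M : ℝ, ∃ x, M ≤ x ∧ Bsg.gam r x ∈ D₀ := by
    by_contra hno
    push_neg at hno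
    choose Mb hMb using hno
    have hGJ : ∀ q ∈ G, Bsg.dd q ∈ J₀ := by
      intro q hqG
      by_contra hdq
      have hu : ∀ p ∈ D₀ \ G, Bsg.dd p ≠ Bsg.dd q := by
        intro p hp he
        exact hdq (he ▸ hJ₀mem p hp)
      have hmem := hfull (Bsg.dd q) hu ⟨q, hqG, rfl⟩ (max (Mb (Bsg.dd q)) 0)
      exact hMb (Bsg.dd q) _ (le_max_left _ _) hmem
    have hGsub : G ⊆ ⋃ r ∈ J₀, Bsg.gam r '' Set.Icc 0 (Mb r) := by
      intro q hqG
      have hr : Bsg.dd q ∈ J₀ := hGJ q hqG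
      have hle : Bsg.mm q ≤ Mb (Bsg.dd q) := by
        by_contra hlt
        have hge : Mb (Bsg.dd q) ≤ Bsg.mm q := le_of_lt (not_le.1 hlt)
        have := hMb (Bsg.dd q) (Bsg.mm q) hge
        rw [Bsg.gam_eq_self q] at this
        exact this (hGD hqG)
      exact Set.mem_biUnion hr ⟨Bsg.mm q, ⟨Bsg.mm_nonneg q, hle⟩, Bsg.gam_eq_self q⟩
    have hCc : IsCompact (⋃ r ∈ J₀, Bsg.gam r '' Set.Icc 0 (Mb r)) :=
      J₀.isCompact_biUnion (fun r _ => isCompact_Icc.image (Bsg.continuous_gam r))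
    have himgc : IsCompact (f '' (⋃ r ∈ J₀, Bsg.gam r '' Set.Icc 0 (Mb r))) := hCc.image hfc
    have hVopen : IsOpen (U₀ \ f '' (⋃ r ∈ J₀, Bsg.gam r '' Set.Icc 0 (Mb r))) :=
      isOpen_interior.sdiff himgc.isClosed
    have hIV : I = U₀ \ f '' (⋃ r ∈ J₀, Bsg.gam r '' Set.Icc 0 (Mb r)) := by
      apply Set.Subset.antisymm
      · intro z hz
        refine ⟨hK'sub hz, ?_⟩
        rintro ⟨w, _, rfl⟩
        have hzr : f w ∈ Set.range f := ⟨w, rfl⟩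
        rw [hrange] at hzr
        exact hzr hz
      · intro z hz
        by_contra hzI
        have hzr : z ∈ Set.range f := by rw [hrange]; exact hzI
        obtain ⟨w, rfl⟩ := hzr
        exact hz.2 (Set.mem_image_of_mem f (hGsub hz.1))
    rw [hIV] at hIopen
    exact hIopen hVopen
  obtain ⟨r₀, hr₀⟩ := hex
  -- M2: every ray avoiding the boundary rays is entirely inside D₀
  have hfullall : ∀ u : ℝ, (∀ p ∈ D₀ \ G, Bsg.dd p ≠ u) → ∀ x : ℝ, Bsg.gam u x ∈ D₀ := by
    intro u hu
    set t : ℝ := u - r₀ with ht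
    set s : Bsg := Bsg.gam t 0 with hs
    have hVso : IsOpen ((fun x : S => f s * x) ⁻¹' U₀) :=
      isOpen_interior.preimage (hsep (f s)).1
    have hIVs : I ⊆ (fun x : S => f s * x) ⁻¹' U₀ := by
      intro a ha
      exact hK'sub ((hIdeal (f s) a ha).1)
    have hCs : IsCompact (f ⁻¹' (K' \ ((fun x : S => f s * x) ⁻¹' U₀))) := by
      refine hpre _ (hK'cpt.diff hVso) ?_
      intro x hx hxI
      exact hx.2 (hIVs hxI)
    obtain ⟨b, hb⟩ := (hCs.image Bsg.continuous_mm).bddAbove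
    obtain ⟨x, hxge, hxD⟩ := hr₀ (max (b+1) (max t 0))
    have hxt : max t 0 ≤ x := le_trans (le_max_right _ _) hxge
    have hxb : b + 1 ≤ x := le_trans (le_max_left _ _) hxge
    have hx0 : 0 ≤ x := le_trans (le_max_right t 0) hxt
    have hqnC : Bsg.gam r₀ x ∉ f ⁻¹' (K' \ ((fun x : S => f s * x) ⁻¹' U₀)) := by
      intro hmem
      have hble : Bsg.mm (Bsg.gam r₀ x) ≤ b :=
        hb (Set.mem_image_of_mem _ hmem)
      rw [Bsg.mm_gam, max_eq_left hx0] at hble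
      linarith
    have hfqV : f (Bsg.gam r₀ x) ∈ (fun x : S => f s * x) ⁻¹' U₀ := by
      by_contra hnot
      exact hqnC ⟨hxD, hnot⟩
    have hsqG : s * Bsg.gam r₀ x ∈ G := by
      show f (s * Bsg.gam r₀ x) ∈ U₀
      rw [hhom]; exact hfqV
    have hddq : Bsg.dd (s * Bsg.gam r₀ x) = u := by
      rw [hs, Bsg.dd_shift_mul t r₀ x hxt, ht]; ring
    exact hfull u hu ⟨s * Bsg.gam r₀ x, hsqG, hddq⟩
  -- the Wallace-type final step
  have hnopen : IsOpen ((fun q : S × S => q.1 * q.2) ⁻¹' {f Bsg.e0}ᶜ) :=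
    (isClosed_singleton.isOpen_compl).preimage hjoint
  have hprodsub : I ×ˢ I ⊆ (fun q : S × S => q.1 * q.2) ⁻¹' {f Bsg.e0}ᶜ := by
    rintro ⟨a, b⟩ ⟨ha, hb⟩
    simp only [Set.mem_preimage, Set.mem_compl_iff, Set.mem_singleton_iff]
    intro heq
    have hmem : a * b ∈ I := (hIdeal a b hb).1
    rw [heq] at hmem
    have hr : f Bsg.e0 ∈ Set.range f := ⟨_, rfl⟩
    rw [hrange] at hr
    exact hr hmem
  obtain ⟨u', v', hu'o, hv'o, hIu, hIv, huv⟩ :=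
    generalized_tube_lemma hIcomp hIcomp hnopen hprodsub
  set V : Set S := u' ∩ v' with hVdef
  have hVo : IsOpen V := hu'o.inter hv'o
  have hIVV : I ⊆ V := Set.subset_inter hIu hIv
  have hCV : IsCompact (f ⁻¹' (K' \ V)) := by
    refine hpre _ (hK'cpt.diff hVo) ?_
    intro x hx hxI
    exact hx.2 (hIVV hxI)
  obtain ⟨J₁, hJ₁⟩ := hCV.elim_finite_subcover (fun r : ℝ => {p : Bsg | Bsg.dd p = r})
    (fun r => Bsg.isOpen_ray r) (fun p _ => Set.mem_iUnion.2 ⟨Bsg.dd p, rfl⟩)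
  have hJ₁mem : ∀ p ∈ f ⁻¹' (K' \ V), Bsg.dd p ∈ J₁ := by
    intro p hp
    rcases Set.mem_iUnion₂.1 (hJ₁ hp) with ⟨r, hrJ, hpr⟩
    have hdd : Bsg.dd p = r := hpr
    rw [hdd]; exact hrJ
  -- choose a ray value p avoiding all the bad rays
  set Fbad : Set ℝ := ((J₀ : Set ℝ) ∪ (J₁ : Set ℝ)) ∪
      (Neg.neg '' ((J₀ : Set ℝ) ∪ (J₁ : Set ℝ))) with hFdef
  have hFfin : Fbad.Finite :=
    ((J₀.finite_toSet.union J₁.finite_toSet).union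
      ((J₀.finite_toSet.union J₁.finite_toSet).image _))
  obtain ⟨p, hp⟩ := ((Set.Ioi_infinite (0:ℝ)).diff hFfin).nonempty
  have hp0 : 0 < p := Set.mem_Ioi.1 hp.1
  have hpavoid : ∀ r : ℝ, r ∈ (J₀ : Set ℝ) ∪ (J₁ : Set ℝ) → p ≠ r ∧ p ≠ -r := by
    intro r hr
    constructor
    · rintro rfl
      exact hp.2 (Or.inl hr)
    · intro hpe
      refine hp.2 (Or.inr ⟨r, hr, ?_⟩)
      rw [hpe]
    -- -r = p
  have ha₁D : Bsg.gam p 0 ∈ D₀ := by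
    refine hfullall p ?_ 0
    intro q hq he
    exact (hpavoid (Bsg.dd q) (Or.inl (Finset.mem_coe.2 (hJ₀mem q hq)))).1 he.symm
  have ha₂D : Bsg.gam (-p) 0 ∈ D₀ := by
    refine hfullall (-p) ?_ 0
    intro q hq he
    refine (hpavoid (Bsg.dd q) (Or.inl (Finset.mem_coe.2 (hJ₀mem q hq)))).2 ?_
    rw [he]; ring
  have ha₁V : f (Bsg.gam p 0) ∈ V := by
    by_contra hnot
    have hmem : Bsg.gam p 0 ∈ f ⁻¹' (K' \ V) := ⟨ha₁D, hnot⟩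
    have := hJ₁mem _ hmem
    rw [Bsg.dd_gam] at this
    exact (hpavoid p (Or.inr (Finset.mem_coe.2 this))).1 rfl
  have ha₂V : f (Bsg.gam (-p) 0) ∈ V := by
    by_contra hnot
    have hmem : Bsg.gam (-p) 0 ∈ f ⁻¹' (K' \ V) := ⟨ha₂D, hnot⟩
    have := hJ₁mem _ hmem
    rw [Bsg.dd_gam] at this
    exact (hpavoid (-p) (Or.inr (Finset.mem_coe.2 this))).2 (neg_neg p).symm
  have hpair : (f (Bsg.gam p 0), f (Bsg.gam (-p) 0)) ∈ u' ×ˢ v' :=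
    ⟨ha₁V.1, ha₂V.2⟩
  have hfinal := huv hpair
  apply hfinal
  show f (Bsg.gam p 0) * f (Bsg.gam (-p) 0) ∈ {f Bsg.e0}
  rw [← hhom, Bsg.gam_cancel p (le_of_lt hp0)]
  exact Set.mem_singleton _
end

section
/- Let S be a Hausdorff locally compact semitopological semigroup, let z ∈ S satisfy z·s = s·z = z for all s ∈ S, and let f : B_{[0,∞)} → S be an injective semigroup homomorphism with range S \ {z} such that every point of S \ {z} is isolated in S. Then for every compact open set U ⊆ S with z ∈ U and every (a,b) ∈ B_{[0,∞)}, the set {(x,y) ∈ B_{[0,∞)} : (a,b) ≼ (x,y) and f(x,y) ∈ U} is finite. -/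
namespace Bsg

/-- Key collapsing lemma: if `v ≼ p` then `(0, v₁) * p = (0, v₂)`. -/
lemma collapse (v p : Bsg) (h : ple v p) :
    (⟨(0, v.1.1), le_rfl, v.2.1⟩ : Bsg) * p = (⟨(0, v.1.2), le_rfl, v.2.2⟩ : Bsg) := by
  obtain ⟨e, hee, hv⟩ := h
  obtain ⟨⟨c, d⟩, hc, hd⟩ := e
  have he' : c = d := by
    have := congrArg (fun q : Bsg => q.1.1) hee
    have := congrArg (fun q : Bsg => q.1.2) hee
    simp only [show ∀ u w : Bsg, u * w = bmul u w from fun _ _ => rfl, bmul] at *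
    rcases le_total d c with h1 | h1 <;> simp_all <;> linarith
  subst he'
  obtain ⟨⟨x, y⟩, hx, hy⟩ := p
  have h1 : v.1.1 = x + c - min y c := congrArg (fun q : Bsg => q.1.1) hv
  have h2 : v.1.2 = y + c - min y c := congrArg (fun q : Bsg => q.1.2) hv
  have hxa : x ≤ v.1.1 := by have := min_le_left y c; have := min_le_right y c; rw [h1]; linarith
  have hdiff : v.1.1 - x = v.1.2 - y := by rw [h1, h2]; ring
  show bmul _ _ = _
  apply Subtype.ext
  simp only [bmul]
  have hmin : min v.1.1 x = x := min_eq_right hxa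
  rw [hmin, Prod.ext_iff]
  constructor <;> simp <;> linarith

end Bsg

open Bsg in
/-- if every point of `S \ {z}` is isolated, then for every compact open
`U ∋ z` and every `(a,b)` the set `↑(a,b) ∩ f⁻¹(U)` is finite. -/
theorem stmt17 {S : Type*} [TopologicalSpace S] [T2Space S] [LocallyCompactSpace S] [Semigroup S]
    (hsep : ∀ a : S, Continuous (fun x : S => a * x) ∧ Continuous (fun x : S => x * a))
    (z : S) (hz : ∀ s : S, z * s = z ∧ s * z = z)
    (f : Bsg → S) (hinj : Function.Injective f)
    (hhom : ∀ u v : Bsg, f (u * v) = f u * f v)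
    (hrange : Set.range f = ({z}ᶜ : Set S))
    (hiso : ∀ s : S, s ≠ z → IsOpen ({s} : Set S))
    (U : Set S) (hUcomp : IsCompact U) (hUopen : IsOpen U) (hzU : z ∈ U) (v : Bsg) :
    {p : Bsg | ple v p ∧ f p ∈ U}.Finite := by
  by_contra hfin
  set T := {p : Bsg | ple v p ∧ f p ∈ U} with hT
  set w : Bsg := ⟨(0, v.1.1), le_rfl, v.2.1⟩ with hwdef
  set q : Bsg := ⟨(0, v.1.2), le_rfl, v.2.2⟩ with hqdef
  have hfz : ∀ p : Bsg, f p ≠ z := by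
    intro p hp
    have : f p ∈ Set.range f := ⟨p, rfl⟩
    rw [hrange] at this
    exact this hp
  -- A = f '' T is infinite and contained in U
  have hA : (f '' T).Infinite := Set.Infinite.image hinj.injOn hfin
  have hAU : f '' T ⊆ U := by rintro s ⟨p, hp, rfl⟩; exact hp.2
  obtain ⟨x, hxU, hacc⟩ := hA.exists_accPt_of_subset_isCompact hUcomp hAU
  -- x must be z
  have hxz : x = z := by
    by_contra hne
    have hopen := hiso x hne
    have h1 : {x} ∈ nhdsWithin x ({x}ᶜ : Set S) :=
      mem_nhdsWithin_of_mem_nhds (hopen.mem_nhds rfl)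
    have h2 : ({x}ᶜ : Set S) ∈ nhdsWithin x ({x}ᶜ : Set S) := self_mem_nhdsWithin
    have h3 : (∅ : Set S) ∈ nhdsWithin x ({x}ᶜ : Set S) := by
      simpa using Filter.inter_mem h1 h2
    have hbot : nhdsWithin x ({x}ᶜ : Set S) = ⊥ := Filter.empty_mem_iff_bot.mp h3
    rw [AccPt, hbot, bot_inf_eq] at hacc
    exact hacc.ne rfl
  rw [hxz] at hacc
  -- the collapsing map
  have hcoll : ∀ p ∈ T, f w * f p = f q := by
    intro p hp
    rw [← hhom, Bsg.collapse v p hp.1]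
  -- continuity contradiction
  have hcont : Continuous (fun s : S => f w * s) := (hsep (f w)).1
  have hVopen : IsOpen ({f q}ᶜ : Set S) := isOpen_compl_singleton
  have hzV : z ∈ ({f q}ᶜ : Set S) := fun h => hfz q (by
    simp only [Set.mem_singleton_iff] at h; exact h.symm)
  have hnz : (fun s : S => f w * s) ⁻¹' ({f q}ᶜ) ∈ nhds z := by
    have : f w * z = z := (hz (f w)).2
    exact hcont.continuousAt.preimage_mem_nhds (by rw [this]; exact hVopen.mem_nhds hzV)
  -- AccPt gives a point of f '' T in this neighbourhood
  have := hacc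
  rw [accPt_iff_nhds] at this
  obtain ⟨y, ⟨hy1, hy2⟩, hy3⟩ := this _ hnz
  obtain ⟨p, hpT, rfl⟩ := hy2
  exact hy1 (hcoll p hpT)
end

section
/- Let S be a Hausdorff locally compact semitopological semigroup, let z ∈ S satisfy z·s = s·z = z for all s ∈ S, and let f : B_{[0,∞)} → S be an injective semigroup homomorphism with range S \ {z} such that every point of S \ {z} is isolated in S. Then z is an isolated point of S, i.e. {z} is open in S. -/
namespace Bsg

lemma ext_coords {u v : Bsg} (h1 : u.1.1 = v.1.1) (h2 : u.1.2 = v.1.2) : u = v :=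
  Subtype.ext (Prod.ext h1 h2)

def P (a b : ℝ) : Bsg := ⟨(max a 0, max b 0), le_max_right a 0, le_max_right b 0⟩

lemma P_fst (a b : ℝ) : (P a b).1.1 = max a 0 := rfl
lemma P_snd (a b : ℝ) : (P a b).1.2 = max b 0 := rfl

lemma one_mul' (x : Bsg) : P 0 0 * x = x := by
  refine ext_coords ?_ ?_ <;>
  · simp only [mul_fst, mul_snd, P_fst, P_snd, max_self]
    rw [min_eq_left x.2.1]; ring

lemma mul_one' (x : Bsg) : x * P 0 0 = x := by
  refine ext_coords ?_ ?_ <;>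
  · simp only [mul_fst, mul_snd, P_fst, P_snd, max_self]
    rw [min_eq_right x.2.2]; ring

end Bsg

/-- if every point of `S \ {z}` is isolated, then `z` is an isolated point
of `S`. -/
theorem stmt18 {S : Type*} [TopologicalSpace S] [T2Space S] [LocallyCompactSpace S] [Semigroup S]
    (hsep : ∀ a : S, Continuous (fun x : S => a * x) ∧ Continuous (fun x : S => x * a))
    (z : S) (hz : ∀ s : S, z * s = z ∧ s * z = z)
    (f : Bsg → S) (hinj : Function.Injective f)
    (hhom : ∀ u v : Bsg, f (u * v) = f u * f v)
    (hrange : Set.range f = ({z}ᶜ : Set S))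
    (hiso : ∀ s : S, s ≠ z → IsOpen ({s} : Set S)) :
    IsOpen ({z} : Set S) := by
  classical
  by_contra hopen
  obtain ⟨K, hKc, hKn⟩ := exists_compact_mem_nhds z
  have hU₀o : IsOpen (interior K) := isOpen_interior
  have hzU₀ : z ∈ interior K := mem_interior_iff_mem_nhds.2 hKn
  set E : Set Bsg := f ⁻¹' interior K with hEdef
  have hzf : ∀ x : Bsg, f x ≠ z := by
    intro x hx
    have hmem : f x ∈ Set.range f := ⟨x, rfl⟩
    rw [hrange] at hmem
    exact hmem (Set.mem_singleton_iff.2 hx)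
  -- every compact set avoiding a nbhd of z, intersected with K, is finite
  have lem0 : ∀ U : Set S, IsOpen U → z ∈ U → {x ∈ E | f x ∉ U}.Finite := by
    intro U hUo hzU
    have hC : IsCompact (K \ U) := hKc.diff hUo
    have hCfin : (K \ U).Finite := by
      obtain ⟨t, htsub, htfin, hcov⟩ := hC.elim_finite_subcover_image
        (c := fun s : S => ({s} : Set S))
        (fun s hs => hiso s (by rintro rfl; exact hs.2 hzU))
        (fun s hs => Set.mem_biUnion hs rfl)
      exact (htfin.biUnion fun _ _ => Set.finite_singleton _).subset hcov
    have hsub : {x ∈ E | f x ∉ U} ⊆ f ⁻¹' (K \ U) :=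
      fun x hx => ⟨interior_subset hx.1, hx.2⟩
    exact (hCfin.preimage hinj.injOn).subset hsub
  -- E is infinite
  have hEinf : E.Infinite := by
    by_contra hfin
    rw [Set.not_infinite] at hfin
    have himg : (f '' E).Finite := hfin.image f
    have hzeq : ({z} : Set S) = interior K \ f '' E := by
      ext s
      constructor
      · rintro rfl
        exact ⟨hzU₀, by rintro ⟨x, _, hfx⟩; exact hzf x hfx⟩
      · rintro ⟨hsU, hsE⟩
        by_contra hsz
        have hsr : s ∈ Set.range f := by rw [hrange]; exact hsz
        obtain ⟨x, rfl⟩ := hsr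
        exact hsE ⟨x, hsU, rfl⟩
    apply hopen
    rw [hzeq]
    exact hU₀o.sdiff himg.isClosed
  -- translates of E-members stay in E, with finitely many exceptions
  have F2 : ∀ a b : Bsg, {x ∈ E | a * x * b ∉ E}.Finite := by
    intro a b
    have h1 : Continuous fun y : S => y * f b := (hsep (f b)).2
    have h2 : Continuous fun y : S => f a * y := (hsep (f a)).1
    have hU2o : IsOpen ((fun y : S => f a * y) ⁻¹' ((fun y : S => y * f b) ⁻¹' interior K)) :=
      (hU₀o.preimage h1).preimage h2
    have hz2 : z ∈ (fun y : S => f a * y) ⁻¹' ((fun y : S => y * f b) ⁻¹' interior K) := by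
      show f a * z * f b ∈ interior K
      rw [(hz (f a)).2, (hz (f b)).1]
      exact hzU₀
    refine (lem0 _ hU2o hz2).subset ?_
    rintro x ⟨hxE, hnot⟩
    refine ⟨hxE, fun hmem => hnot ?_⟩
    show f (a * x * b) ∈ interior K
    rw [hhom, hhom]
    exact hmem
  -- fibers of translations meet E finitely
  have F1L : ∀ a c : Bsg, {x ∈ E | a * x = c}.Finite := by
    intro a c
    have h2 : Continuous fun y : S => f a * y := (hsep (f a)).1
    have hUo : IsOpen (({f c}ᶜ : Set S)) := isClosed_singleton.isOpen_compl
    have hzU : z ∈ (fun y : S => f a * y) ⁻¹' ({f c}ᶜ : Set S) := by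
      show f a * z ∈ ({f c}ᶜ : Set S)
      rw [(hz (f a)).2]
      exact fun h => hzf c (Set.mem_singleton_iff.1 h).symm
    refine (lem0 _ (hUo.preimage h2) hzU).subset ?_
    rintro x ⟨hxE, hax⟩
    refine ⟨hxE, fun hmem => ?_⟩
    exact hmem (show f a * f x ∈ ({f c} : Set S) from by
      rw [Set.mem_singleton_iff, ← hhom, hax])
  have F1R : ∀ b c : Bsg, {x ∈ E | x * b = c}.Finite := by
    intro b c
    have h1 : Continuous fun y : S => y * f b := (hsep (f b)).2
    have hUo : IsOpen (({f c}ᶜ : Set S)) := isClosed_singleton.isOpen_compl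
    have hzU : z ∈ (fun y : S => y * f b) ⁻¹' ({f c}ᶜ : Set S) := by
      show z * f b ∈ ({f c}ᶜ : Set S)
      rw [(hz (f b)).1]
      exact fun h => hzf c (Set.mem_singleton_iff.1 h).symm
    refine (lem0 _ (hUo.preimage h1) hzU).subset ?_
    rintro x ⟨hxE, hax⟩
    refine ⟨hxE, fun hmem => ?_⟩
    exact hmem (show f x * f b ∈ ({f c} : Set S) from by
      rw [Set.mem_singleton_iff, ← hhom, hax])
  -- pigeonhole: image of infinite set under finite-fiber map is infinite
  have pigeon : ∀ (A : Set Bsg) (φ : Bsg → Bsg), A.Infinite →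
      (∀ y, {x ∈ A | φ x = y}.Finite) → (φ '' A).Infinite := by
    intro A φ hA hfib hfin
    exact hA ((hfin.biUnion (fun y _ => hfib y)).subset
      (fun x hx => Set.mem_biUnion (Set.mem_image_of_mem φ hx) ⟨hx, rfl⟩))
  -- uncountable counting argument
  have counting : ∀ (A : Set Bsg) (g : ℝ → Bsg → Bsg), A.Infinite → A ⊆ E →
      (∀ s ∈ Set.Ioc (0:ℝ) 1, {x ∈ E | g s x ∉ E}.Finite) →
      (∀ x ∈ A, {s ∈ Set.Ioc (0:ℝ) 1 | g s x ∈ E}.Finite) → False := by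
    intro A g hA hAE hbad hgood
    have e := hA.natEmbedding
    have hG : (⋃ n : ℕ, {s ∈ Set.Ioc (0:ℝ) 1 | g s ((e n : A) : Bsg) ∈ E}).Countable :=
      Set.countable_iUnion (fun n => (hgood _ (e n).2).countable)
    have hunc : ¬ (Set.Ioc (0:ℝ) 1).Countable := by
      intro hcount
      have h1 : Cardinal.mk (Set.Ioc (0:ℝ) 1) ≤ Cardinal.aleph0 := by
        rw [Cardinal.mk_le_aleph0_iff, ← Set.countable_coe_iff] at *
        exact hcount
      rw [Cardinal.mk_Ioc_real (by norm_num : (0:ℝ) < 1)] at h1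
      exact absurd h1 (not_le.2 Cardinal.aleph0_lt_continuum)
    obtain ⟨s, hs, hsG⟩ : ∃ s ∈ Set.Ioc (0:ℝ) 1,
        s ∉ ⋃ n : ℕ, {s ∈ Set.Ioc (0:ℝ) 1 | g s ((e n : A) : Bsg) ∈ E} := by
      by_contra hcon
      push_neg at hcon
      exact hunc (hG.mono hcon)
    have hinfbad : {x ∈ E | g s x ∉ E}.Infinite := by
      apply Set.infinite_of_injective_forall_mem
        (f := fun n : ℕ => ((e n : A) : Bsg))
      · exact Subtype.val_injective.comp e.injective
      · intro n
        refine ⟨hAE (e n).2, fun hmem => hsG (Set.mem_iUnion.2 ⟨n, hs, hmem⟩)⟩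
    exact hinfbad (hbad s hs)
  -- Step Z: the horizontal axis meets E finitely
  have stepZ : ¬ {x ∈ E | x.1.2 = 0}.Infinite := by
    intro hA
    refine counting {x ∈ E | x.1.2 = 0} (fun s x => x * Bsg.P s s) hA (fun x hx => hx.1) ?_ ?_
    · intro s hs
      refine (F2 (Bsg.P 0 0) (Bsg.P s s)).subset ?_
      rintro x ⟨hxE, h⟩
      exact ⟨hxE, by rwa [Bsg.one_mul']⟩
    · rintro x ⟨hxE, hx2⟩
      apply Set.Finite.of_finite_image (f := fun s : ℝ => x * Bsg.P s s)
      · apply Set.Finite.subset (F1L (Bsg.P 0 (x.1.1 + 1)) (Bsg.P 0 1))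
        rintro y ⟨s, ⟨hs, hyE⟩, rfl⟩
        have hw : (0:ℝ) ≤ x.1.1 := x.2.1
        have hs0 : (0:ℝ) ≤ s := le_of_lt hs.1
        have hy1 : (x * Bsg.P s s).1.1 = x.1.1 + s := by
          rw [Bsg.mul_fst]
          simp only [Bsg.P_fst, Bsg.P_snd]
          rw [max_eq_left hs0, hx2, min_eq_left hs0]; ring
        have hy2 : (x * Bsg.P s s).1.2 = s := by
          rw [Bsg.mul_snd]
          simp only [Bsg.P_fst, Bsg.P_snd]
          rw [max_eq_left hs0, hx2, min_eq_left hs0]; ring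
        refine ⟨hyE, ?_⟩
        show Bsg.P 0 (x.1.1 + 1) * (x * Bsg.P s s) = Bsg.P 0 1
        refine Bsg.ext_coords ?_ ?_
        · rw [Bsg.mul_fst, hy1]
          simp only [Bsg.P_fst, Bsg.P_snd]
          rw [max_eq_left (by linarith : (0:ℝ) ≤ x.1.1 + 1),
            min_eq_right (by linarith [hs.2] : x.1.1 + s ≤ x.1.1 + 1), max_self]
          ring
        · rw [Bsg.mul_snd, hy1, hy2]
          simp only [Bsg.P_fst, Bsg.P_snd]
          rw [max_eq_left (by linarith : (0:ℝ) ≤ x.1.1 + 1),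
            min_eq_right (by linarith [hs.2] : x.1.1 + s ≤ x.1.1 + 1),
            max_eq_left (by norm_num : (0:ℝ) ≤ 1)]
          ring
      · intro s₁ h₁ s₂ h₂ hEq
        have e2 := congrArg (fun y : Bsg => y.1.2) hEq
        simp only [Bsg.mul_snd, Bsg.P_fst, Bsg.P_snd] at e2
        rw [hx2, max_eq_left h₁.1.1.le, max_eq_left h₂.1.1.le,
          min_eq_left h₁.1.1.le, min_eq_left h₂.1.1.le] at e2
        linarith
  -- Step Z': the vertical axis meets E finitely
  have stepZ' : ¬ {x ∈ E | x.1.1 = 0}.Infinite := by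
    intro hA
    refine counting {x ∈ E | x.1.1 = 0} (fun s x => Bsg.P s s * x) hA (fun x hx => hx.1) ?_ ?_
    · intro s hs
      refine (F2 (Bsg.P s s) (Bsg.P 0 0)).subset ?_
      rintro x ⟨hxE, h⟩
      exact ⟨hxE, by rwa [Bsg.mul_one']⟩
    · rintro x ⟨hxE, hx1⟩
      apply Set.Finite.of_finite_image (f := fun s : ℝ => Bsg.P s s * x)
      · apply Set.Finite.subset (F1L (Bsg.P 0 1) (Bsg.P 0 (1 + x.1.2)))
        rintro y ⟨s, ⟨hs, hyE⟩, rfl⟩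
        have hx2nn : (0:ℝ) ≤ x.1.2 := x.2.2
        have hs0 : (0:ℝ) ≤ s := le_of_lt hs.1
        have hy1 : (Bsg.P s s * x).1.1 = s := by
          rw [Bsg.mul_fst]
          simp only [Bsg.P_fst, Bsg.P_snd]
          rw [max_eq_left hs0, hx1, min_eq_right hs0]; ring
        have hy2 : (Bsg.P s s * x).1.2 = s + x.1.2 := by
          rw [Bsg.mul_snd]
          simp only [Bsg.P_fst, Bsg.P_snd]
          rw [max_eq_left hs0, hx1, min_eq_right hs0]; ring
        refine ⟨hyE, ?_⟩
        show Bsg.P 0 1 * (Bsg.P s s * x) = Bsg.P 0 (1 + x.1.2)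
        refine Bsg.ext_coords ?_ ?_
        · rw [Bsg.mul_fst, hy1]
          simp only [Bsg.P_fst, Bsg.P_snd]
          rw [max_eq_left (by norm_num : (0:ℝ) ≤ 1), min_eq_right hs.2, max_self]
          ring
        · rw [Bsg.mul_snd, hy1, hy2]
          simp only [Bsg.P_fst, Bsg.P_snd]
          rw [max_eq_left (by norm_num : (0:ℝ) ≤ 1), min_eq_right hs.2,
            max_eq_left (by linarith : (0:ℝ) ≤ 1 + x.1.2)]
          ring
      · intro s₁ h₁ s₂ h₂ hEq
        have e1 := congrArg (fun y : Bsg => y.1.1) hEq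
        simp only [Bsg.mul_fst, Bsg.P_fst, Bsg.P_snd] at e1
        rw [hx1, max_eq_left h₁.1.1.le, max_eq_left h₂.1.1.le,
          min_eq_right h₁.1.1.le, min_eq_right h₂.1.1.le] at e1
        linarith
  -- main case analysis
  by_cases h1 : ∃ r, {x ∈ E | x.1.2 ≤ r}.Infinite
  · obtain ⟨r, hr⟩ := h1
    obtain ⟨x₀, hx₀⟩ := hr.nonempty
    have hr0 : (0:ℝ) ≤ r := le_trans x₀.2.2 hx₀.2
    have hbadfin : {x ∈ E | x * Bsg.P r 0 ∉ E}.Finite :=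
      (F2 (Bsg.P 0 0) (Bsg.P r 0)).subset
        (by rintro x ⟨hxE, h⟩; exact ⟨hxE, by rwa [Bsg.one_mul']⟩)
    have hB₁ : ({x ∈ E | x.1.2 ≤ r} \ {x ∈ E | x * Bsg.P r 0 ∉ E}).Infinite :=
      hr.diff hbadfin
    have himg := pigeon _ (fun x => x * Bsg.P r 0) hB₁ (fun y =>
      (F1R (Bsg.P r 0) y).subset (by rintro x ⟨⟨⟨hxE, _⟩, _⟩, hxy⟩; exact ⟨hxE, hxy⟩))
    apply stepZ
    refine himg.mono ?_
    rintro y ⟨x, ⟨⟨hxE, hxd⟩, hxgood⟩, rfl⟩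
    have hxg : x * Bsg.P r 0 ∈ E := by
      by_contra hc
      exact hxgood ⟨hxE, hc⟩
    refine ⟨hxg, ?_⟩
    show (x * Bsg.P r 0).1.2 = 0
    rw [Bsg.mul_snd]
    simp only [Bsg.P_fst, Bsg.P_snd]
    rw [max_eq_left hr0, max_self, min_eq_left hxd]
    ring
  by_cases h2 : ∃ q, {x ∈ E | x.1.1 ≤ q}.Infinite
  · obtain ⟨q, hq⟩ := h2
    obtain ⟨x₀, hx₀⟩ := hq.nonempty
    have hq0 : (0:ℝ) ≤ q := le_trans x₀.2.1 hx₀.2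
    have hbadfin : {x ∈ E | Bsg.P 0 q * x ∉ E}.Finite :=
      (F2 (Bsg.P 0 q) (Bsg.P 0 0)).subset
        (by rintro x ⟨hxE, h⟩; exact ⟨hxE, by rwa [Bsg.mul_one']⟩)
    have hB₁ : ({x ∈ E | x.1.1 ≤ q} \ {x ∈ E | Bsg.P 0 q * x ∉ E}).Infinite :=
      hq.diff hbadfin
    have himg := pigeon _ (fun x => Bsg.P 0 q * x) hB₁ (fun y =>
      (F1L (Bsg.P 0 q) y).subset (by rintro x ⟨⟨⟨hxE, _⟩, _⟩, hxy⟩; exact ⟨hxE, hxy⟩))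
    apply stepZ'
    refine himg.mono ?_
    rintro y ⟨x, ⟨⟨hxE, hxc⟩, hxgood⟩, rfl⟩
    have hxg : Bsg.P 0 q * x ∈ E := by
      by_contra hc
      exact hxgood ⟨hxE, hc⟩
    refine ⟨hxg, ?_⟩
    show (Bsg.P 0 q * x).1.1 = 0
    rw [Bsg.mul_fst]
    simp only [Bsg.P_fst, Bsg.P_snd]
    rw [max_eq_left hq0, max_self, min_eq_right hxc]
    ring
  -- both coordinates go to infinity on E
  push_neg at h1 h2
  have hdfin : ∀ r, {x ∈ E | x.1.2 ≤ r}.Finite := fun r => h1 r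
  have hcfin : ∀ q, {x ∈ E | x.1.1 ≤ q}.Finite := fun q => h2 q
  refine counting E (fun s x => Bsg.P 0 s * x) hEinf subset_rfl ?_ ?_
  · intro s hs
    exact (F2 (Bsg.P 0 s) (Bsg.P 0 0)).subset
      (by rintro x ⟨hxE, h⟩; exact ⟨hxE, by rwa [Bsg.mul_one']⟩)
  · intro x hxE
    apply Set.Finite.of_finite_image (f := fun s : ℝ => Bsg.P 0 s * x)
    · apply Set.Finite.subset ((hcfin 0).union (hdfin x.1.2))
      rintro y ⟨s, ⟨hs, hyE⟩, rfl⟩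
      have hs0 : (0:ℝ) ≤ s := hs.1.le
      rcases le_total s x.1.1 with h | h
      · refine Or.inr ⟨hyE, ?_⟩
        show (Bsg.P 0 s * x).1.2 ≤ x.1.2
        rw [Bsg.mul_snd]
        simp only [Bsg.P_fst, Bsg.P_snd]
        rw [max_eq_left hs0, min_eq_left h]
        linarith
      · refine Or.inl ⟨hyE, ?_⟩
        show (Bsg.P 0 s * x).1.1 ≤ 0
        rw [Bsg.mul_fst]
        simp only [Bsg.P_fst, Bsg.P_snd]
        rw [max_self, max_eq_left hs0, min_eq_right h]
        linarith
    · intro s₁ h₁ s₂ h₂ hEq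
      have e1 := congrArg (fun y : Bsg => y.1.1) hEq
      have e2 := congrArg (fun y : Bsg => y.1.2) hEq
      simp only [Bsg.mul_fst, Bsg.mul_snd, Bsg.P_fst, Bsg.P_snd] at e1 e2
      rw [max_eq_left h₁.1.1.le, max_eq_left h₂.1.1.le] at e1 e2
      have hm : min s₁ x.1.1 = min s₂ x.1.1 := by linarith
      linarith
end

section
/- Let S be a Hausdorff locally compact semitopological semigroup, let I ⊆ S be a nonempty compact ideal (s·a ∈ I and a·s ∈ I for all s ∈ S, a ∈ I), and let f : B_{[0,∞)} → S be an injective semigroup homomorphism with range S \ I such that every point of S \ I is isolated in S. Then I is an open subset of S. -/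
namespace Bsg

/-- Auxiliary: the element `(0,t)` of `B_{[0,∞)}`. -/
def V (t : ℝ) (ht : 0 ≤ t) : Bsg := ⟨(0, t), le_refl 0, ht⟩

/-- Auxiliary: the element `(t,0)` of `B_{[0,∞)}`. -/
def H (t : ℝ) (ht : 0 ≤ t) : Bsg := ⟨(t, 0), ht, le_refl 0⟩

lemma mul_val (u v : Bsg) : (u * v).1 =
    (u.1.1 + v.1.1 - min u.1.2 v.1.1, u.1.2 + v.1.2 - min u.1.2 v.1.1) := rfl

/-- Right multiplication by `(0,t)` is the vertical shift by `t`. -/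
lemma mul_V_val (u : Bsg) {t : ℝ} (ht : 0 ≤ t) : (u * V t ht).1 = (u.1.1, u.1.2 + t) := by
  rw [mul_val]
  have h1 : (V t ht).1.1 = 0 := rfl
  have h2 : (V t ht).1.2 = t := rfl
  rw [h1, h2, min_eq_right u.2.2]
  rw [Prod.mk.injEq]
  constructor <;> ring

/-- Left multiplication by `(t,0)` is the horizontal shift by `t`. -/
lemma H_mul_val {t : ℝ} (ht : 0 ≤ t) (u : Bsg) : (H t ht * u).1 = (t + u.1.1, u.1.2) := by
  rw [mul_val]
  have h1 : (H t ht).1.1 = t := rfl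
  have h2 : (H t ht).1.2 = 0 := rfl
  rw [h1, h2, min_eq_left u.2.1]
  rw [Prod.mk.injEq]
  constructor <;> ring

/-- Left multiplication by `(0,s)` collapses `{(x, x+β) : x ≤ s}` to a point. -/
lemma V_mul_val {s : ℝ} (hs : 0 ≤ s) (u : Bsg) (hx : u.1.1 ≤ s) :
    (V s hs * u).1 = (0, s + u.1.2 - u.1.1) := by
  rw [mul_val]
  have h1 : (V s hs).1.1 = 0 := rfl
  have h2 : (V s hs).1.2 = s := rfl
  rw [h1, h2, min_eq_right hx]
  rw [Prod.mk.injEq]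
  constructor <;> ring

end Bsg

open Topology Filter in
/-- if every point of `S \ I` is isolated, then the compact ideal `I` is an
open subset of `S`. -/
theorem stmt19 {S : Type*} [TopologicalSpace S] [T2Space S] [LocallyCompactSpace S] [Semigroup S]
    (hsep : ∀ a : S, Continuous (fun x : S => a * x) ∧ Continuous (fun x : S => x * a))
    (I : Set S) (hne : I.Nonempty) (hIcomp : IsCompact I)
    (hIdeal : ∀ s : S, ∀ a ∈ I, s * a ∈ I ∧ a * s ∈ I)
    (f : Bsg → S) (hinj : Function.Injective f)
    (hhom : ∀ u v : Bsg, f (u * v) = f u * f v)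
    (hrange : Set.range f = Iᶜ)
    (hiso : ∀ s : S, s ∉ I → IsOpen ({s} : Set S)) :
    IsOpen I := by
  by_contra hIopen
  -- a point of I which is not interior
  have hex : ∃ a ∈ I, I ∉ 𝓝 a := by
    by_contra h
    push_neg at h
    exact hIopen (isOpen_iff_mem_nhds.mpr h)
  obtain ⟨a, haI, haN⟩ := hex
  obtain ⟨K, hK, hIK⟩ := exists_compact_superset hIcomp
  set N := interior K with hNdef
  have hNopen : IsOpen N := isOpen_interior
  set T : Set Bsg := f ⁻¹' N with hTdef
  have hfI : ∀ u : Bsg, f u ∉ I := by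
    intro u hu
    have h1 : f u ∈ Set.range f := ⟨u, rfl⟩
    rw [hrange] at h1
    exact h1 hu
  have hfiso : ∀ u : Bsg, IsOpen ({f u} : Set S) := fun u => hiso _ (hfI u)
  -- Core accumulation lemma: every infinite subset of T accumulates at a point of I.
  have core : ∀ G : Set Bsg, G.Infinite → (∀ u ∈ G, u ∈ T) →
      ∃ z, z ∈ I ∧ z ∈ closure (f '' G) := by
    intro G hGinf hGT
    have g : ℕ ↪ G := hGinf.natEmbedding
    set h : ℕ → S := fun n => f ((g n : Bsg)) with hhdef
    have hinj2 : Function.Injective h := by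
      intro m n hmn
      exact g.injective (Subtype.ext (hinj hmn))
    haveI : (Filter.map h Filter.atTop).NeBot := Filter.map_neBot
    have hle : Filter.map h Filter.atTop ≤ Filter.principal K := by
      rw [Filter.le_principal_iff, Filter.mem_map]
      apply Filter.univ_mem'
      intro n
      exact interior_subset (s := K) (hGT _ (g n).2)
    obtain ⟨z, hzK, hz⟩ := hK.exists_clusterPt hle
    have hcl : z ∈ closure (f '' G) := by
      have h1 : Filter.map h Filter.atTop ≤ Filter.principal (f '' G) := by
        rw [Filter.le_principal_iff, Filter.mem_map]
        apply Filter.univ_mem'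
        intro n
        exact Set.mem_image_of_mem f (g n).2
      exact mem_closure_iff_clusterPt.mpr (hz.mono h1)
    refine ⟨z, ?_, hcl⟩
    by_contra hzI
    have h1 : z ∈ Set.range f := by rw [hrange]; exact hzI
    obtain ⟨u₀, rfl⟩ := h1
    have hfr : ∀ m : ℕ, ∃ n, m ≤ n ∧ h n = f u₀ := by
      intro m
      haveI : (𝓝 (f u₀) ⊓ Filter.map h Filter.atTop).NeBot := hz
      have h1 : {f u₀} ∈ 𝓝 (f u₀) := (hfiso u₀).mem_nhds rfl
      have h2 : h '' Set.Ici m ∈ Filter.map h Filter.atTop :=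
        Filter.image_mem_map (Filter.mem_atTop m)
      obtain ⟨x, hx1, hx2⟩ := Filter.nonempty_of_mem
        (Filter.inter_mem (Filter.mem_inf_of_left h1) (Filter.mem_inf_of_right h2))
      obtain ⟨n, hn1, hn2⟩ := hx2
      rw [Set.mem_singleton_iff] at hx1
      exact ⟨n, hn1, by rw [hn2, hx1]⟩
    obtain ⟨n₀, _, he₀⟩ := hfr 0
    obtain ⟨n₁, hge, he₁⟩ := hfr (n₀ + 1)
    have : n₀ = n₁ := hinj2 (by rw [he₀, he₁])
    omega
  -- T is infinite
  have hTinf : T.Infinite := by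
    by_contra hfin
    rw [Set.not_infinite] at hfin
    have hWopen : IsOpen (N \ (f '' T)) := hNopen.sdiff ((hfin.image f).isClosed)
    have haW : a ∈ N \ (f '' T) := by
      refine ⟨hIK haI, ?_⟩
      rintro ⟨u, _, hfu⟩
      exact hfI u (hfu ▸ haI)
    have hsub : N \ (f '' T) ⊆ I := by
      rintro x ⟨hxN, hxT⟩
      by_contra hxI
      have h1 : x ∈ Set.range f := by rw [hrange]; exact hxI
      obtain ⟨u, rfl⟩ := h1
      exact hxT ⟨u, hxN, rfl⟩
    exact haN (Filter.mem_of_superset (hWopen.mem_nhds haW) hsub)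
  -- Fact A: fibers of the collapsing translations meet T finitely.
  have factA : ∀ (s : ℝ) (hs : 0 ≤ s) (c : Bsg),
      {u : Bsg | u ∈ T ∧ Bsg.V s hs * u = c}.Finite := by
    intro s hs c
    by_contra hinf
    obtain ⟨z, hzI, hzc⟩ := core _ hinf (fun u hu => hu.1)
    have hμc : Continuous (fun x : S => f (Bsg.V s hs) * x) := (hsep (f (Bsg.V s hs))).1
    have h1 : f (Bsg.V s hs) * z = f c := by
      by_contra hne
      have hO : IsOpen ({f c}ᶜ : Set S) := isOpen_compl_singleton
      have hzO : z ∈ (fun x : S => f (Bsg.V s hs) * x) ⁻¹' {f c}ᶜ :=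
        Set.mem_compl_singleton_iff.mpr hne
      obtain ⟨x, hx1, hx2⟩ := mem_closure_iff.mp hzc _ (hO.preimage hμc) hzO
      obtain ⟨u, hu, rfl⟩ := hx2
      apply hx1
      show f (Bsg.V s hs) * f u ∈ {f c}
      rw [← hhom, hu.2]
      rfl
    have h2 : f c ∈ I := h1 ▸ (hIdeal (f (Bsg.V s hs)) z hzI).1
    exact hfI c h2
  -- Fact B: for any fixed continuous translation, all but finitely many points
  -- of T are mapped back into T.
  have factB : ∀ (μ : S → S), Continuous μ → (∀ x ∈ I, μ x ∈ I) →
      ∀ (act : Bsg → Bsg), (∀ u, μ (f u) = f (act u)) →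
      {u : Bsg | u ∈ T ∧ act u ∉ T}.Finite := by
    intro μ hμc hμI act hact
    by_contra hinf
    obtain ⟨z, hzI, hzc⟩ := core _ hinf (fun u hu => hu.1)
    have h1 : z ∈ μ ⁻¹' N := hIK (hμI z hzI)
    obtain ⟨x, hx1, hx2⟩ := mem_closure_iff.mp hzc _ (hNopen.preimage hμc) h1
    obtain ⟨u, hu, rfl⟩ := hx2
    apply hu.2
    show f (act u) ∈ N
    rw [← hact u]
    exact hx1
  by_cases hcnt : T.Countable
  · -- countable case: every t ≥ 0 is a difference of two χ-values on T
    set φ : Bsg × Bsg → ℝ := fun p => (p.2.1.2 - p.2.1.1) - (p.1.1.2 - p.1.1.1) with hφ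
    have hsub : Set.Ici (0:ℝ) ⊆ φ '' (T ×ˢ T) := by
      intro t ht
      rw [Set.mem_Ici] at ht
      have hfin := factB (fun x => x * f (Bsg.V t ht)) (hsep (f (Bsg.V t ht))).2
        (fun x hx => (hIdeal (f (Bsg.V t ht)) x hx).2)
        (fun u => u * Bsg.V t ht) (fun u => (hhom u (Bsg.V t ht)).symm)
      obtain ⟨u, hu⟩ := (hTinf.diff hfin).nonempty
      have huT : u ∈ T := hu.1
      have huVT : u * Bsg.V t ht ∈ T := by
        by_contra hx
        exact hu.2 ⟨huT, hx⟩
      refine ⟨(u, u * Bsg.V t ht), Set.mem_prod.mpr ⟨huT, huVT⟩, ?_⟩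
      show ((u * Bsg.V t ht).1.2 - (u * Bsg.V t ht).1.1) - (u.1.2 - u.1.1) = t
      rw [Bsg.mul_V_val u ht]
      ring
    have hC : (Set.Ici (0:ℝ)).Countable :=
      Set.Countable.mono hsub ((hcnt.prod hcnt).image φ)
    have hnc : ¬ (Set.Ici (0:ℝ)).Countable := by
      intro hc
      have h1 : (Set.range Real.exp).Countable := by
        apply Set.Countable.mono _ hc
        rintro _ ⟨x, rfl⟩
        exact (Real.exp_pos x).le
      have h2 : (Set.univ : Set ℝ).Countable := by
        have h3 := h1.preimage Real.exp_injective
        rw [Set.preimage_range] at h3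
        exact h3
      exact Cardinal.not_countable_real h2
    exact hnc hC
  · -- uncountable case: diagonal shifts by 1/(n+1) give an infinite fiber for factA
    set t : ℕ → ℝ := fun n => 1 / ((n : ℝ) + 1) with htdef
    have ht0 : ∀ n, 0 ≤ t n := fun n => by positivity
    have ht1 : ∀ n, t n ≤ 1 := by
      intro n
      rw [htdef]
      rw [div_le_one (by positivity)]
      have : (0:ℝ) ≤ (n : ℝ) := Nat.cast_nonneg n
      linarith
    have htinj : Function.Injective t := by
      intro m n hmn
      have h1 : ((m : ℝ) + 1)⁻¹ = ((n : ℝ) + 1)⁻¹ := by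
        simpa [htdef, one_div] using hmn
      have h2 : ((m : ℝ) + 1) = ((n : ℝ) + 1) := inv_injective h1
      have h3 : (m : ℝ) = n := by linarith
      exact_mod_cast h3
    set act : ℕ → Bsg → Bsg :=
      fun n u => Bsg.H (t n) (ht0 n) * u * Bsg.V (t n) (ht0 n) with hact
    have hEfin : ∀ n : ℕ, {u : Bsg | u ∈ T ∧ act n u ∉ T}.Finite := by
      intro n
      apply factB (fun x => f (Bsg.H (t n) (ht0 n)) * x * f (Bsg.V (t n) (ht0 n)))
      · have hcont1 := (hsep (f (Bsg.H (t n) (ht0 n)))).1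
        have hcont2 := (hsep (f (Bsg.V (t n) (ht0 n)))).2
        exact hcont2.comp hcont1
      · intro x hx
        exact (hIdeal (f (Bsg.V (t n) (ht0 n))) _ ((hIdeal (f (Bsg.H (t n) (ht0 n))) x hx).1)).2
      · intro u
        show f (Bsg.H (t n) (ht0 n)) * f u * f (Bsg.V (t n) (ht0 n)) = _
        rw [← hhom, ← hhom]
    set E : Set Bsg := ⋃ n : ℕ, {u : Bsg | u ∈ T ∧ act n u ∉ T} with hE
    have hEc : E.Countable := Set.countable_iUnion (fun n => (hEfin n).countable)
    have hTE : ¬ T ⊆ E := fun hsub => hcnt (Set.Countable.mono hsub hEc)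
    obtain ⟨u, huT, huE⟩ := Set.not_subset.mp hTE
    have hs0 : (0:ℝ) ≤ u.1.1 + 1 := by have := u.2.1; linarith
    set s : ℝ := u.1.1 + 1 with hs
    set c : Bsg := ⟨(0, u.1.2 + 1), le_refl 0, by
      show (0:ℝ) ≤ u.1.2 + 1
      have := u.2.2; linarith⟩ with hc
    have hDval : ∀ n : ℕ, (act n u).1 = (t n + u.1.1, u.1.2 + t n) := by
      intro n
      show (Bsg.H (t n) (ht0 n) * u * Bsg.V (t n) (ht0 n)).1 = _
      rw [Bsg.mul_V_val _ (ht0 n), Bsg.H_mul_val (ht0 n) u]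
    have hmem : ∀ n : ℕ, act n u ∈ {w : Bsg | w ∈ T ∧ Bsg.V s hs0 * w = c} := by
      intro n
      have hDT : act n u ∈ T := by
        by_contra hx
        exact huE (Set.mem_iUnion.mpr ⟨n, huT, hx⟩)
      refine ⟨hDT, ?_⟩
      apply Subtype.ext
      have hDx : (act n u).1.1 ≤ s := by
        rw [hDval n]
        have := ht1 n
        simp only [hs]
        linarith
      rw [Bsg.V_mul_val hs0 (act n u) hDx, hDval n]
      show _ = ((0 : ℝ), u.1.2 + 1)
      rw [Prod.mk.injEq]
      constructor
      · rfl
      · show s + (u.1.2 + t n) - (t n + u.1.1) = u.1.2 + 1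
        rw [hs]; ring
    have hFinf : {w : Bsg | w ∈ T ∧ Bsg.V s hs0 * w = c}.Infinite := by
      apply Set.infinite_of_injective_forall_mem (f := fun n : ℕ => act n u)
      · intro m n hmn
        have h1 : (act m u).1.1 = (act n u).1.1 := congrArg (fun w : Bsg => w.1.1) hmn
        rw [hDval m, hDval n] at h1
        have h2 : t m + u.1.1 = t n + u.1.1 := h1
        exact htinj (by linarith)
      · exact hmem
    exact hFinf (factA s hs0 c)
end
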